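/- arXiv:2003.10393 — 10 statements merged into one kernel-verified Lean document; each statement's English description precedes it below -/
import Mathlib

section
/- Let r ≥ 2 be an integer and c > 0 a real. For every integer k ≥ r, the hitting probability satisfies 0 < q_k(c) < 1; that is, the walk started at k reaches 0 with positive probability, and with positive probability it never reaches 0. -/
open MeasureTheory ProbabilityTheory Filter
open scoped NNReal ENNReal

private lemma aux_choose_lb (m : ℕ) : ∀ n, m + 1 ≤ n → n - m ≤ n.choose (m + 1) := by
  intro n
  induction n with
  | zero => intro h; omega
  | succ p ih =>
    intro h
    rcases Nat.lt_or_ge p (m + 1) with hp | hp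
    · have hpm : p = m := by omega
      subst hpm
      have h1 : (p + 1).choose (p + 1) = 1 := Nat.choose_self _
      omega
    · have h1 := ih hp
      have h2 : 0 < p.choose m := Nat.choose_pos (by omega)
      rw [Nat.choose_succ_succ, Nat.succ_eq_add_one]
      omega

private lemma aux_prod_lb (f : ℕ → ℝ) : ∀ s : Finset ℕ, (∀ j ∈ s, 0 ≤ f j) →
    (∀ j ∈ s, f j ≤ 1) → 1 - ∑ j ∈ s, f j ≤ ∏ j ∈ s, (1 - f j) := by
  intro s
  induction s using Finset.cons_induction with
  | empty => simp
  | cons a s ha ih =>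
    intro h0 h1
    rw [Finset.sum_cons, Finset.prod_cons]
    have hih := ih (fun j hj => h0 j (Finset.mem_cons_of_mem hj))
      (fun j hj => h1 j (Finset.mem_cons_of_mem hj))
    have ha0 : 0 ≤ f a := h0 a (Finset.mem_cons_self a s)
    have ha1 : f a ≤ 1 := h1 a (Finset.mem_cons_self a s)
    have hs0 : 0 ≤ ∑ j ∈ s, f j := Finset.sum_nonneg fun j hj => h0 j (Finset.mem_cons_of_mem hj)
    nlinarith [mul_le_mul_of_nonneg_left hih (by linarith : (0:ℝ) ≤ 1 - f a),
      mul_nonneg ha0 hs0]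

/-- Let `r ≥ 2`, `c > 0`, and `k ≥ r`. Let `ξ ℓ` (for `ℓ ≥ 1`) be independent
Poisson random variables with means `C(ℓ-1, r-1) * c^r`, and let `S ℓ = ∑_{j=1}^ℓ (ξ j - 1)`.
Then the hitting probability `q k = Pr(∃ ℓ ≥ 1, k + S ℓ ≤ 0)` satisfies `0 < q k < 1`. -/
theorem poisson_walk_hitting_prob_pos_lt_one
    (r : ℕ) (hr : 2 ≤ r) (c : ℝ≥0) (hc : 0 < c) (k : ℕ) (hk : r ≤ k)
    {Ω : Type} [MeasurableSpace Ω] (μ : Measure Ω) [IsProbabilityMeasure μ]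
    (ξ : ℕ → Ω → ℕ) (hmeas : ∀ ℓ, Measurable (ξ ℓ))
    (hindep : iIndepFun ξ μ)
    (hdist : ∀ ℓ, 1 ≤ ℓ →
      μ.map (ξ ℓ) = poissonMeasure ((Nat.choose (ℓ - 1) (r - 1) : ℝ≥0) * c ^ r)) :
    0 < μ {ω | ∃ ℓ ≥ 1, (k : ℤ) + ∑ j ∈ Finset.Icc 1 ℓ, ((ξ j ω : ℤ) - 1) ≤ 0} ∧
    μ {ω | ∃ ℓ ≥ 1, (k : ℤ) + ∑ j ∈ Finset.Icc 1 ℓ, ((ξ j ω : ℤ) - 1) ≤ 0} < 1 := by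
  classical
  set H := {ω | ∃ ℓ ≥ 1, (k : ℤ) + ∑ j ∈ Finset.Icc 1 ℓ, ((ξ j ω : ℤ) - 1) ≤ 0} with hHdef
  set lam : ℕ → ℝ≥0 := fun j => (Nat.choose (j - 1) (r - 1) : ℝ≥0) * c ^ r with hlamdef
  set e : ℕ → ℝ := fun j => Real.exp (-(lam j : ℝ)) with hedef
  have hc' : (0:ℝ) < (c:ℝ) ^ r := pow_pos (NNReal.coe_pos.mpr hc) r
  have he_pos : ∀ j, 0 < e j := fun j => Real.exp_pos _
  have he_le_one : ∀ j, e j ≤ 1 := by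
    intro j
    apply Real.exp_le_one_iff.mpr
    simp
  -- value of μ (ξ j = 0)
  have hzero : ∀ j, 1 ≤ j → μ (ξ j ⁻¹' {0}) = ENNReal.ofReal (e j) := by
    intro j hj
    rw [← Measure.map_apply (hmeas j) (measurableSet_singleton 0), hdist j hj]
    rw [poissonMeasure_singleton]
    simp [hedef, hlamdef]
  have hne : ∀ j, 1 ≤ j → μ (ξ j ⁻¹' ({0}ᶜ)) = ENNReal.ofReal (1 - e j) := by
    intro j hj
    rw [Set.preimage_compl,
      measure_compl (hmeas j (measurableSet_singleton 0)) (measure_ne_top μ _),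
      measure_univ, hzero j hj, ENNReal.ofReal_sub _ (he_pos j).le, ENNReal.ofReal_one]
  -- finite product formula
  have hprodf : ∀ (s : Finset ℕ) (T : Set ℕ), MeasurableSet T →
      μ (⋂ j ∈ s, ξ j ⁻¹' T) = ∏ j ∈ s, μ (ξ j ⁻¹' T) := by
    intro s T hT
    exact hindep.measure_inter_preimage_eq_mul (sets := fun _ => T) s (fun i _ => hT)
  -- Part 1 : positivity
  have hpos : 0 < μ H := by
    have hsub : (⋂ j ∈ Finset.Icc 1 k, ξ j ⁻¹' ({0} : Set ℕ)) ⊆ H := by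
      intro ω hω
      simp only [Set.mem_iInter, Set.mem_preimage, Set.mem_singleton_iff] at hω
      refine ⟨k, by omega, ?_⟩
      have hsum : ∑ j ∈ Finset.Icc 1 k, ((ξ j ω : ℤ) - 1) = ∑ _j ∈ Finset.Icc 1 k, (-1 : ℤ) :=
        Finset.sum_congr rfl (fun j hj => by rw [hω j hj]; norm_num)
      rw [hsum, Finset.sum_const, Nat.card_Icc, nsmul_eq_mul]
      push_cast
      omega
    refine lt_of_lt_of_le ?_ (measure_mono hsub)
    rw [hprodf _ _ (measurableSet_singleton 0)]
    refine CanonicallyOrderedAdd.prod_pos.mpr ?_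
    intro j hj
    rw [hzero j (Finset.mem_Icc.mp hj).1]
    exact ENNReal.ofReal_pos.mpr (he_pos j)
  -- Part 2 : less than one
  set ρ : ℝ := Real.exp (-((c:ℝ) ^ r)) with hρdef
  have hρ0 : 0 < ρ := Real.exp_pos _
  have hρ1 : ρ < 1 := Real.exp_lt_one_iff.mpr (by linarith)
  have hej : ∀ j, r ≤ j → e j ≤ ρ ^ (j - r + 1) := by
    intro j hj
    have hch : (j - r + 1 : ℕ) ≤ (j - 1).choose (r - 1) := by
      have h1 := aux_choose_lb (r - 2) (j - 1) (by omega)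
      have hrr : r - 2 + 1 = r - 1 := by omega
      rw [hrr] at h1
      omega
    have hch' : ((j - r + 1 : ℕ) : ℝ) ≤ ((j - 1).choose (r - 1) : ℝ) := Nat.cast_le.mpr hch
    have hlam : ((j - r + 1 : ℕ) : ℝ) * (c:ℝ) ^ r ≤ (lam j : ℝ) := by
      simp only [hlamdef]
      push_cast at hch' ⊢
      nlinarith
    calc e j = Real.exp (-(lam j : ℝ)) := rfl
      _ ≤ Real.exp (-(((j - r + 1 : ℕ) : ℝ) * (c:ℝ) ^ r)) := Real.exp_le_exp.mpr (by linarith)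
      _ = ρ ^ (j - r + 1) := by
          rw [hρdef, ← Real.exp_nat_mul]
          congr 1
          ring
  obtain ⟨m₀, hm₀⟩ : ∃ m₀, ρ ^ m₀ < (1 - ρ) / 2 := by
    have ht := tendsto_pow_atTop_nhds_zero_of_lt_one hρ0.le hρ1
    exact (ht.eventually (gt_mem_nhds (by linarith : (0:ℝ) < (1 - ρ) / 2))).exists
  set M := r + m₀ with hMdef
  have h1ρ : 0 < 1 - ρ := by linarith
  have hgeom : ∀ N, ∑ i ∈ Finset.range N, ρ ^ i ≤ (1 - ρ)⁻¹ := by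
    intro N
    rw [geom_sum_eq hρ1.ne N, div_le_iff_of_neg (by linarith : ρ - 1 < 0)]
    have heq : (1 - ρ)⁻¹ * (ρ - 1) = -1 := by
      field_simp
      ring
    rw [heq]
    nlinarith [pow_nonneg hρ0.le N]
  have htail : ∀ n, ∑ j ∈ Finset.Icc M n, e j ≤ 1 / 2 := by
    intro n
    have h1 : ∀ j ∈ Finset.Icc M n, e j ≤ ρ ^ m₀ * ρ ^ (j - M) := by
      intro j hj
      have hjM : M ≤ j := (Finset.mem_Icc.mp hj).1
      refine (hej j (by omega)).trans ?_
      rw [← pow_add]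
      apply pow_le_pow_of_le_one hρ0.le hρ1.le
      omega
    have h2 : ∑ j ∈ Finset.Icc M n, ρ ^ (j - M) = ∑ i ∈ Finset.range (n + 1 - M), ρ ^ i := by
      refine Finset.sum_nbij' (fun j => j - M) (fun i => i + M) ?_ ?_ ?_ ?_ ?_
      · intro a ha
        simp only [Finset.mem_Icc] at ha
        simp only [Finset.mem_range]
        omega
      · intro a ha
        simp only [Finset.mem_range] at ha
        simp only [Finset.mem_Icc]
        omega
      · intro a ha
        simp only [Finset.mem_Icc] at ha
        show a - M + M = a
        omega
      · intro a _
        show a + M - M = a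
        omega
      · intro a _
        rfl
    calc ∑ j ∈ Finset.Icc M n, e j ≤ ∑ j ∈ Finset.Icc M n, ρ ^ m₀ * ρ ^ (j - M) :=
          Finset.sum_le_sum h1
      _ = ρ ^ m₀ * ∑ j ∈ Finset.Icc M n, ρ ^ (j - M) := by rw [Finset.mul_sum]
      _ ≤ ρ ^ m₀ * (1 - ρ)⁻¹ := by
          rw [h2]
          exact mul_le_mul_of_nonneg_left (hgeom _) (pow_nonneg hρ0.le _)
      _ ≤ 1 / 2 := by
          have hinv : 0 < (1 - ρ)⁻¹ := inv_pos.mpr h1ρ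
          have h3 := mul_le_mul_of_nonneg_right hm₀.le hinv.le
          have heq2 : (1 - ρ) / 2 * (1 - ρ)⁻¹ = 1 / 2 := by
            field_simp
          linarith
  set A : ℕ → Set Ω := fun j => ξ j ⁻¹' ({0}ᶜ) with hAdef
  set G : ℕ → Set Ω := fun n => ⋂ j ∈ Finset.Icc r n, A j with hGdef
  have hAm : ∀ j, MeasurableSet (A j) := fun j => hmeas j (measurableSet_singleton 0).compl
  have hGm : ∀ n, MeasurableSet (G n) :=
    fun n => Finset.measurableSet_biInter _ (fun j _ => hAm j)
  have hGanti : Antitone G := by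
    intro a b hab ω hω
    simp only [hGdef, Set.mem_iInter] at *
    intro j hj
    rcases Finset.mem_Icc.mp hj with ⟨hj1, hj2⟩
    exact hω j (Finset.mem_Icc.mpr ⟨hj1, le_trans hj2 hab⟩)
  have hHsub : H ⊆ (⋂ n, G n)ᶜ := by
    intro ω hω hmem
    obtain ⟨ℓ, hℓ1, hℓ⟩ := hω
    have hξ : ∀ j, r ≤ j → 1 ≤ ξ j ω := by
      intro j hj
      have h4 : ω ∈ G j := Set.mem_iInter.mp hmem j
      simp only [hGdef, Set.mem_iInter] at h4
      have h5 := h4 j (Finset.mem_Icc.mpr ⟨hj, le_refl j⟩)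
      simp only [hAdef, Set.mem_preimage, Set.mem_compl_iff, Set.mem_singleton_iff] at h5
      omega
    have hbd : ∀ j ∈ Finset.Icc 1 ℓ, (if j < r then (-1:ℤ) else 0) ≤ (ξ j ω : ℤ) - 1 := by
      intro j _
      by_cases hjr : j < r
      · rw [if_pos hjr]; omega
      · rw [if_neg hjr]
        have := hξ j (by omega)
        omega
    have hsum := Finset.sum_le_sum hbd
    have hcard : ∑ j ∈ Finset.Icc 1 ℓ, (if j < r then (-1:ℤ) else 0) =
        -((((Finset.Icc 1 ℓ).filter (· < r)).card : ℤ)) := by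
      rw [Finset.sum_ite, Finset.sum_const, Finset.sum_const]
      simp
    have hfil : ((Finset.Icc 1 ℓ).filter (· < r)).card ≤ r - 1 := by
      have hsub2 : (Finset.Icc 1 ℓ).filter (· < r) ⊆ Finset.Icc 1 (r - 1) := by
        intro j hj
        simp only [Finset.mem_filter, Finset.mem_Icc] at *
        omega
      have h6 := Finset.card_le_card hsub2
      rw [Nat.card_Icc] at h6
      omega
    rw [hcard] at hsum
    omega
  have hGpos : 0 < μ (⋂ n, G n) := by
    rw [hGanti.measure_iInter (fun n => (hGm n).nullMeasurableSet) ⟨0, measure_ne_top μ _⟩]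
    have hP0 : 0 < ∏ j ∈ Finset.Icc r (M - 1), (1 - e j) := by
      apply Finset.prod_pos
      intro j hj
      have hjr : r ≤ j := (Finset.mem_Icc.mp hj).1
      have hchpos : 0 < (j - 1).choose (r - 1) := Nat.choose_pos (by omega)
      have hlampos : 0 < (lam j : ℝ) := by
        simp only [hlamdef]
        push_cast
        have : (1:ℝ) ≤ ((j - 1).choose (r - 1) : ℝ) := by exact_mod_cast hchpos
        nlinarith
      have : e j < 1 := Real.exp_lt_one_iff.mpr (by linarith)
      linarith
    refine lt_of_lt_of_le
      (ENNReal.ofReal_pos.mpr (mul_pos hP0 (by norm_num : (0:ℝ) < 1/2))) (le_iInf ?_)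
    intro n
    have hGn : μ (G n) = ENNReal.ofReal (∏ j ∈ Finset.Icc r n, (1 - e j)) := by
      simp only [hGdef, hAdef]
      rw [hprodf _ _ ((measurableSet_singleton 0).compl),
        ENNReal.ofReal_prod_of_nonneg (fun j _ => by linarith [he_le_one j])]
      exact Finset.prod_congr rfl
        (fun j hj => hne j (le_trans (by omega) (Finset.mem_Icc.mp hj).1))
    rw [hGn]
    apply ENNReal.ofReal_le_ofReal
    rw [← Finset.prod_filter_mul_prod_filter_not (Finset.Icc r n) (· < M)]
    have hnn : ∀ j, (0:ℝ) ≤ 1 - e j := fun j => by linarith [he_le_one j]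
    have hle1 : ∀ j, (1:ℝ) - e j ≤ 1 := fun j => by linarith [he_pos j]
    refine mul_le_mul ?_ ?_ (by norm_num) (Finset.prod_nonneg (fun j _ => hnn j))
    · -- product over small indices
      have hF : (Finset.Icc r n).filter (· < M) ⊆ Finset.Icc r (M - 1) := by
        intro j hj
        simp only [Finset.mem_filter, Finset.mem_Icc] at *
        omega
      rw [← Finset.prod_sdiff hF]
      exact mul_le_of_le_one_left (Finset.prod_nonneg (fun j _ => hnn j))
        (Finset.prod_le_one (fun j _ => hnn j) (fun j _ => hle1 j))
    · -- product over large indices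
      have hF' : (Finset.Icc r n).filter (fun j => ¬ j < M) ⊆ Finset.Icc M n := by
        intro j hj
        simp only [Finset.mem_filter, Finset.mem_Icc] at *
        omega
      have hlb := aux_prod_lb e ((Finset.Icc r n).filter (fun j => ¬ j < M))
        (fun j _ => (he_pos j).le) (fun j _ => he_le_one j)
      have hsum2 : ∑ j ∈ (Finset.Icc r n).filter (fun j => ¬ j < M), e j ≤ 1 / 2 :=
        le_trans (Finset.sum_le_sum_of_subset_of_nonneg hF' (fun j _ _ => (he_pos j).le))
          (htail n)
      linarith
  refine ⟨hpos, lt_of_le_of_lt (measure_mono hHsub) ?_⟩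
  rw [measure_compl (MeasurableSet.iInter hGm) (measure_ne_top μ _), measure_univ]
  exact ENNReal.sub_lt_self ENNReal.one_ne_top one_ne_zero hGpos.ne'
end

section
/- Let r ≥ 2 be an integer and 0 < c₁ ≤ c₂ be reals. Then for every integer k ≥ 0, the hitting probabilities satisfy q_k(c₂) ≤ q_k(c₁): increasing the parameter c makes the inhomogeneous Poisson random walk less likely to ever reach 0. -/
open MeasureTheory ProbabilityTheory Filter Real
open scoped NNReal ENNReal

/-- partial sums of `exp(-x) x^n/n!` are antitone in `x` on `[0,∞)`. -/
lemma poisson_partial_sum_antitoneOn (m : ℕ) :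
    AntitoneOn (fun x : ℝ => Real.exp (-x) * ∑ n ∈ Finset.range (m + 1), x ^ n / n.factorial)
      (Set.Ici 0) := by
  set f : ℝ → ℝ := fun x => Real.exp (-x) * ∑ n ∈ Finset.range (m + 1), x ^ n / n.factorial
  have hder : ∀ x : ℝ, HasDerivAt f (-(Real.exp (-x) * x ^ m / m.factorial)) x := by
    intro x
    have hg : HasDerivAt (fun x : ℝ => ∑ n ∈ Finset.range (m + 1), x ^ n / n.factorial)
        (∑ n ∈ Finset.range m, x ^ n / n.factorial) x := by
      have h1 : HasDerivAt (fun x : ℝ => ∑ n ∈ Finset.range (m + 1), x ^ n / n.factorial)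
          (∑ n ∈ Finset.range (m + 1), (n : ℝ) * x ^ (n - 1) / n.factorial) x := by
        apply HasDerivAt.fun_sum
        intro n _
        simpa [div_eq_mul_inv, mul_comm, mul_assoc, mul_left_comm] using
          ((hasDerivAt_pow n x).div_const (n.factorial : ℝ))
      convert h1 using 1
      rw [Finset.sum_range_succ']
      simp only [Nat.cast_zero, zero_mul, Nat.factorial_zero, Nat.cast_one, zero_div, add_zero]
      apply Finset.sum_congr rfl
      intro n _
      rw [Nat.factorial_succ]
      push_cast
      field_simp
    have he : HasDerivAt (fun x : ℝ => Real.exp (-x)) (-Real.exp (-x)) x := by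
      simpa using (hasDerivAt_neg x).exp
    have := he.mul hg
    refine HasDerivAt.congr_deriv this ?_
    have : ∑ n ∈ Finset.range (m + 1), x ^ n / n.factorial
        = ∑ n ∈ Finset.range m, x ^ n / n.factorial + x ^ m / m.factorial :=
      Finset.sum_range_succ _ m
    rw [this]
    ring
  apply antitoneOn_of_deriv_nonpos (convex_Ici 0)
  · exact (Continuous.mul (by continuity) (by continuity)).continuousOn
  · intro x hx
    exact (hder x).differentiableAt.differentiableWithinAt
  · intro x hx
    rw [interior_Ici] at hx
    rw [(hder x).deriv]
    have hx0 : (0:ℝ) ≤ x := le_of_lt hx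
    have : 0 ≤ Real.exp (-x) * x ^ m / m.factorial := by positivity
    linarith

lemma poissonMeasure_eq_toMeasure' (r : ℝ≥0) : poissonMeasure r = (poissonPMF r).toMeasure := by
  refine Measure.ext_of_singleton (fun n => ?_)
  rw [poissonMeasure_singleton, PMF.toMeasure_apply_singleton _ _ (MeasurableSet.singleton n),
    ← poissonPMFReal_ofReal_eq_poissonPMF]
  rfl

lemma poissonMeasure_Iio_anti {l l' : ℝ≥0} (h : l ≤ l') (N : ℕ) :
    poissonMeasure l' (Set.Iio N) ≤ poissonMeasure l (Set.Iio N) := by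
  cases N with
  | zero =>
    rw [show Set.Iio (0:ℕ) = ∅ by ext n; simp]
    simp
  | succ m =>
    have key : ∀ lam : ℝ≥0, poissonMeasure lam (Set.Iio (m+1)) =
        ENNReal.ofReal (∑ n ∈ Finset.range (m + 1), poissonPMFReal lam n) := by
      intro lam
      rw [poissonMeasure_eq_toMeasure', PMF.toMeasure_apply _ ((Set.Iio (m+1)).to_countable.measurableSet)]
      have : ∑' n : ℕ, (Set.Iio (m+1)).indicator (poissonPMF lam) n
          = ∑ n ∈ Finset.range (m+1), (Set.Iio (m+1)).indicator (poissonPMF lam) n := by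
        apply tsum_eq_sum
        intro n hn
        have : ¬ n < m + 1 := by simpa using hn
        simp [Set.indicator_of_notMem, this]
      rw [this]
      rw [ENNReal.ofReal_sum_of_nonneg (fun n _ => poissonPMFReal_nonneg)]
      apply Finset.sum_congr rfl
      intro n hn
      have : n ∈ Set.Iio (m+1) := by simpa using hn
      rw [Set.indicator_of_mem this]
      rfl
    rw [key, key]
    apply ENNReal.ofReal_le_ofReal
    have := poisson_partial_sum_antitoneOn m (a := (l:ℝ)) (b := (l':ℝ))
    have h1 : ∀ lam : ℝ≥0, ∑ n ∈ Finset.range (m + 1), poissonPMFReal lam n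
        = Real.exp (-(lam:ℝ)) * ∑ n ∈ Finset.range (m + 1), (lam:ℝ) ^ n / n.factorial := by
      intro lam
      rw [Finset.mul_sum]
      apply Finset.sum_congr rfl
      intro n _
      rw [poissonPMFReal]
      ring
    rw [h1, h1]
    exact poisson_partial_sum_antitoneOn m l.coe_nonneg l'.coe_nonneg h

/-- downward-closed sets of ℕ have antitone Poisson measure in the rate. -/
lemma poissonMeasure_downward_anti {l l' : ℝ≥0} (h : l ≤ l') {S : Set ℕ}
    (hS : ∀ ⦃a b : ℕ⦄, a ≤ b → b ∈ S → a ∈ S) :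
    poissonMeasure l' S ≤ poissonMeasure l S := by
  by_cases hU : S = Set.univ
  · subst hU
    simp
  · have hne : ∃ n, n ∉ S := by
      by_contra hc
      push_neg at hc
      exact hU (Set.eq_univ_of_forall hc)
    classical
    have hSN : S = Set.Iio (Nat.find hne) := by
      ext n
      constructor
      · intro hn
        by_contra hlt
        have : Nat.find hne ≤ n := by simpa [Set.mem_Iio] using hlt
        exact Nat.find_spec hne (hS this hn)
      · intro hn
        have := Nat.find_min hne (by simpa using hn)
        simpa using this
    rw [hSN]
    exact poissonMeasure_Iio_anti h _
noncomputable def pQ {L : ℕ} (Λ : Fin L → ℝ≥0) (A : Set (Fin L → ℕ)) : ℝ≥0∞ :=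
  ∑' x : Fin L → ℕ, A.indicator (fun _ => (1:ℝ≥0∞)) x * ∏ j, poissonPMF (Λ j) (x j)

lemma pQ_factor {L : ℕ} (M : Fin L → ℝ≥0) (A : Set (Fin L → ℕ)) (i : Fin L) :
    pQ M A = ∑' y : {j : Fin L // j ≠ i} → ℕ,
      (∏ j : {j : Fin L // j ≠ i}, poissonPMF (M j) (y j)) *
        poissonMeasure (M i) {n : ℕ | (Equiv.piSplitAt i (fun _ : Fin L => ℕ)).symm (n, y) ∈ A} := by
  classical
  set e := Equiv.piSplitAt i (fun _ : Fin L => ℕ) with he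
  have h1 : pQ M A = ∑' p : ℕ × ({j : Fin L // j ≠ i} → ℕ),
      A.indicator (fun _ => (1:ℝ≥0∞)) (e.symm p) * ∏ j, poissonPMF (M j) (e.symm p j) :=
    (Equiv.tsum_eq e.symm _).symm
  rw [h1, ENNReal.tsum_prod', ENNReal.tsum_comm]
  apply tsum_congr
  intro y
  have hcoord : ∀ n : ℕ, ∀ (j : Fin L) (hj : j ≠ i), e.symm (n, y) j = y ⟨j, hj⟩ := by
    intro n j hj
    simp [he, Equiv.piSplitAt, hj]
  have hcoordi : ∀ n : ℕ, e.symm (n, y) i = n := by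
    intro n
    simp [he, Equiv.piSplitAt]
  have hprod : ∀ n : ℕ, (∏ j, poissonPMF (M j) (e.symm (n, y) j))
      = poissonPMF (M i) n * ∏ j : {j : Fin L // j ≠ i}, poissonPMF (M j) (y j) := by
    intro n
    rw [← Finset.mul_prod_erase Finset.univ _ (Finset.mem_univ i), hcoordi]
    congr 1
    rw [Finset.prod_subtype (Finset.univ.erase i)
      (p := fun j => j ≠ i) (fun x => by simp)]
    apply Finset.prod_congr rfl
    intro j _
    rw [hcoord n j j.2]
  calc ∑' n : ℕ, A.indicator (fun _ => (1:ℝ≥0∞)) (e.symm (n, y)) *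
        ∏ j, poissonPMF (M j) (e.symm (n, y) j)
      = ∑' n : ℕ, (∏ j : {j : Fin L // j ≠ i}, poissonPMF (M j) (y j)) *
          ({n : ℕ | e.symm (n, y) ∈ A}.indicator (poissonPMF (M i)) n) := by
        apply tsum_congr
        intro n
        rw [hprod]
        by_cases hn : e.symm (n, y) ∈ A
        · rw [Set.indicator_of_mem hn, Set.indicator_of_mem (by exact hn)]
          ring
        · rw [Set.indicator_of_notMem hn, Set.indicator_of_notMem (by exact hn)]
          ring
    _ = (∏ j : {j : Fin L // j ≠ i}, poissonPMF (M j) (y j)) *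
          poissonMeasure (M i) {n : ℕ | e.symm (n, y) ∈ A} := by
        rw [ENNReal.tsum_mul_left]
        congr 1
        rw [poissonMeasure_eq_toMeasure', PMF.toMeasure_apply _
          (({n : ℕ | e.symm (n, y) ∈ A}).to_countable.measurableSet)]

lemma pQ_step {L : ℕ} (Λ Λ' : Fin L → ℝ≥0) (i : Fin L)
    (hoff : ∀ j, j ≠ i → Λ j = Λ' j) (hi : Λ i ≤ Λ' i)
    {A : Set (Fin L → ℕ)}
    (hA : ∀ ⦃x y : Fin L → ℕ⦄, (∀ j, x j ≤ y j) → y ∈ A → x ∈ A) :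
    pQ Λ' A ≤ pQ Λ A := by
  classical
  rw [pQ_factor Λ A i, pQ_factor Λ' A i]
  apply ENNReal.tsum_le_tsum
  intro y
  have hW : (∏ j : {j : Fin L // j ≠ i}, poissonPMF (Λ' j) (y j))
      = ∏ j : {j : Fin L // j ≠ i}, poissonPMF (Λ j) (y j) := by
    apply Finset.prod_congr rfl
    intro j _
    rw [hoff j j.2]
  rw [hW]
  apply mul_le_mul_right _ _
  apply poissonMeasure_downward_anti hi
  intro a b hab hb
  apply hA _ hb
  intro j
  by_cases hj : j = i
  · subst hj
    simp [Equiv.piSplitAt, hab]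
  · simp [Equiv.piSplitAt, hj]

lemma pQ_anti {L : ℕ} (Λ Λ' : Fin L → ℝ≥0) (hle : ∀ j, Λ j ≤ Λ' j)
    {A : Set (Fin L → ℕ)}
    (hA : ∀ ⦃x y : Fin L → ℕ⦄, (∀ j, x j ≤ y j) → y ∈ A → x ∈ A) :
    pQ Λ' A ≤ pQ Λ A := by
  classical
  set H : ℕ → Fin L → ℝ≥0 := fun t j => if (j : ℕ) < t then Λ' j else Λ j with hH
  have h0 : H 0 = Λ := by funext j; simp [hH]
  have hL : H L = Λ' := by funext j; simp [hH, j.2]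
  have step : ∀ t, pQ (H (t + 1)) A ≤ pQ (H t) A := by
    intro t
    by_cases ht : t < L
    · apply pQ_step (H t) (H (t+1)) ⟨t, ht⟩
      · intro j hj
        have hjt : (j : ℕ) ≠ t := fun h => hj (Fin.ext h)
        simp only [hH]
        congr 1
        simp only [eq_iff_iff]
        omega
      · simp only [hH]
        simp only [lt_self_iff_false, if_false, Nat.lt_succ_self, if_true]
        exact hle _
      · exact hA
    · have : H (t + 1) = H t := by
        funext j
        have := j.2
        simp only [hH]
        congr 1
        simp only [eq_iff_iff]
        omega
      rw [this]
  have chain : ∀ t, pQ (H t) A ≤ pQ (H 0) A := by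
    intro t
    induction t with
    | zero => exact le_refl _
    | succ n ih => exact le_trans (step n) ih
  calc pQ Λ' A = pQ (H L) A := by rw [hL]
    _ ≤ pQ (H 0) A := chain L
    _ = pQ Λ A := by rw [h0]
lemma measure_pre_eq_pQ {Ω : Type} [MeasurableSpace Ω] (μ : Measure Ω) [IsProbabilityMeasure μ]
    (ξ : ℕ → Ω → ℕ) (hmeas : ∀ ℓ, Measurable (ξ ℓ))
    (hindep : iIndepFun ξ μ)
    (Λ : ℕ → ℝ≥0) (hdist : ∀ ℓ, 1 ≤ ℓ → μ.map (ξ ℓ) = poissonMeasure (Λ ℓ))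
    (L : ℕ) (A : Set (Fin L → ℕ)) :
    μ ((fun ω (i : Fin L) => ξ ((i : ℕ) + 1) ω) ⁻¹' A) = pQ (fun i : Fin L => Λ ((i : ℕ) + 1)) A := by
  classical
  set T : Ω → (Fin L → ℕ) := fun ω i => ξ ((i : ℕ) + 1) ω with hT
  have hTmeas : Measurable T := measurable_pi_lambda _ (fun i => hmeas _)
  -- partition into fibers
  have hpart : T ⁻¹' A = ⋃ x : Fin L → ℕ, (if x ∈ A then T ⁻¹' {x} else ∅) := by
    ext ω
    simp only [Set.mem_preimage, Set.mem_iUnion]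
    constructor
    · intro hω
      exact ⟨T ω, by simp [hω]⟩
    · rintro ⟨x, hx⟩
      by_cases hxa : x ∈ A
      · simp only [hxa, if_true, Set.mem_preimage, Set.mem_singleton_iff] at hx
        rwa [hx]
      · simp [hxa] at hx
  have hdisj : Pairwise (Function.onFun Disjoint
      (fun x : Fin L → ℕ => (if x ∈ A then T ⁻¹' {x} else ∅))) := by
    intro x y hxy
    unfold Function.onFun
    by_cases hx : x ∈ A <;> by_cases hy : y ∈ A <;> simp [hx, hy]
    rw [Set.disjoint_left]
    intro ω hωx hωy
    simp only [Set.mem_preimage, Set.mem_singleton_iff] at hωx hωy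
    exact hxy (hωx.symm.trans hωy)
  have hmeasfib : ∀ x : Fin L → ℕ, MeasurableSet ((if x ∈ A then T ⁻¹' {x} else ∅) : Set Ω) := by
    intro x
    by_cases hx : x ∈ A <;> simp [hx]
    exact hTmeas (MeasurableSet.singleton x)
  have hfiber : ∀ x : Fin L → ℕ,
      μ (T ⁻¹' {x}) = ∏ i : Fin L, (poissonPMF (Λ ((i : ℕ) + 1))) (x i) := by
    intro x
    -- express as biInter over Icc 1 L
    set xe : ℕ → ℕ := fun j => if h : j - 1 < L then x ⟨j - 1, h⟩ else 0 with hxe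
    have hset : T ⁻¹' {x} = ⋂ j ∈ Finset.Icc 1 L, ξ j ⁻¹' {xe j} := by
      ext ω
      simp only [Set.mem_preimage, Set.mem_singleton_iff, Set.mem_iInter, funext_iff]
      constructor
      · intro hω j hj
        simp only [Finset.mem_Icc] at hj
        have h1 : j - 1 < L := by omega
        have h2 : (⟨j - 1, h1⟩ : Fin L).val + 1 = j := by simp; omega
        simp only [hxe, h1, dif_pos]
        rw [← hω ⟨j - 1, h1⟩, hT]
        simp only [h2]
      · intro hω i
        have hj : (i : ℕ) + 1 ∈ Finset.Icc 1 L := by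
          simp only [Finset.mem_Icc]
          omega
        have := hω _ hj
        have h1 : (i : ℕ) + 1 - 1 < L := by simp [i.2]
        simp only [hxe, h1, dif_pos] at this
        have h2 : (⟨(i : ℕ) + 1 - 1, h1⟩ : Fin L) = i := Fin.ext (by simp)
        rw [h2] at this
        exact this
    rw [hset, hindep.meas_biInter (fun j hj => ⟨{xe j}, MeasurableSet.singleton _, rfl⟩)]
    have hsingle : ∀ j ∈ Finset.Icc 1 L, μ (ξ j ⁻¹' {xe j})
        = (poissonPMF (Λ j)) (xe j) := by
      intro j hj
      simp only [Finset.mem_Icc] at hj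
      rw [← Measure.map_apply (hmeas j) (MeasurableSet.singleton _), hdist j hj.1,
        poissonMeasure_eq_toMeasure', PMF.toMeasure_apply_singleton _ _ (MeasurableSet.singleton _)]
    rw [Finset.prod_congr rfl hsingle]
    have : Finset.Icc 1 L = Finset.Ico 1 (L + 1) := by
      ext j; simp [Nat.lt_succ_iff]
    rw [this, Finset.prod_Ico_eq_prod_range]
    simp only [Nat.add_sub_cancel]
    rw [← Fin.prod_univ_eq_prod_range (fun i => (poissonPMF (Λ (1 + i))) (xe (1 + i))) L]
    apply Finset.prod_congr rfl
    intro i _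
    have h1 : 1 + (i : ℕ) - 1 < L := by have := i.2; omega
    simp only [hxe, h1, dif_pos]
    have h2 : (⟨1 + (i : ℕ) - 1, h1⟩ : Fin L) = i := Fin.ext (by simp only [Fin.val_mk]; omega)
    rw [h2, Nat.add_comm 1 (i : ℕ)]
  rw [hpart, measure_iUnion hdisj hmeasfib, pQ]
  apply tsum_congr
  intro x
  by_cases hx : x ∈ A
  · simp only [hx, if_true, Set.indicator_of_mem, one_mul, hfiber x]
  · simp [hx]
def xext {L : ℕ} (x : Fin L → ℕ) (j : ℕ) : ℕ := if h : j - 1 < L then x ⟨j - 1, h⟩ else 0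

def hitSet (k L : ℕ) : Set (Fin L → ℕ) :=
  {x | ∃ ℓ, 1 ≤ ℓ ∧ ℓ ≤ L ∧ (k : ℤ) + ∑ j ∈ Finset.Icc 1 ℓ, ((xext x j : ℤ) - 1) ≤ 0}

lemma hitSet_down (k L : ℕ) :
    ∀ ⦃x y : Fin L → ℕ⦄, (∀ j, x j ≤ y j) → y ∈ hitSet k L → x ∈ hitSet k L := by
  intro x y hxy hy
  obtain ⟨ℓ, h1, h2, h3⟩ := hy
  refine ⟨ℓ, h1, h2, le_trans (add_le_add_right (Finset.sum_le_sum ?_) _) h3⟩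
  intro j _
  have : xext x j ≤ xext y j := by
    unfold xext
    by_cases h : j - 1 < L
    · simp only [h, dif_pos]; exact hxy _
    · simp [h]
  omega

lemma preimage_hitSet_char {Ω : Type} (ξ : ℕ → Ω → ℕ) (k L : ℕ) :
    (fun ω (i : Fin L) => ξ ((i : ℕ) + 1) ω) ⁻¹' (hitSet k L)
      = {ω | ∃ ℓ, 1 ≤ ℓ ∧ ℓ ≤ L ∧
          (k : ℤ) + ∑ j ∈ Finset.Icc 1 ℓ, ((ξ j ω : ℤ) - 1) ≤ 0} := by
  ext ω
  simp only [Set.mem_preimage, hitSet, Set.mem_setOf_eq]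
  have hsum : ∀ ℓ, ℓ ≤ L →
      ∑ j ∈ Finset.Icc 1 ℓ, ((xext (fun i : Fin L => ξ ((i : ℕ) + 1) ω) j : ℤ) - 1)
        = ∑ j ∈ Finset.Icc 1 ℓ, ((ξ j ω : ℤ) - 1) := by
    intro ℓ hℓ
    apply Finset.sum_congr rfl
    intro j hj
    simp only [Finset.mem_Icc] at hj
    have h1 : j - 1 < L := by omega
    unfold xext
    simp only [h1, dif_pos, Fin.val_mk]
    have h2 : j - 1 + 1 = j := by omega
    rw [h2]
  constructor
  · rintro ⟨ℓ, h1, h2, h3⟩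
    exact ⟨ℓ, h1, h2, by rwa [hsum ℓ h2] at h3⟩
  · rintro ⟨ℓ, h1, h2, h3⟩
    exact ⟨ℓ, h1, h2, by rwa [hsum ℓ h2]⟩

/-- Let `r ≥ 2` and `0 < c₁ ≤ c₂`. For `c > 0`, let `ξ ℓ` (for `ℓ ≥ 1`) be
independent Poisson random variables with means `C(ℓ-1, r-1) * c^r`, let
`S ℓ = ∑_{j=1}^ℓ (ξ j - 1)`, and let `q k (c)` be the probability that `∃ ℓ ≥ 1, k + S ℓ ≤ 0`.
Then for every `k ≥ 0` we have `q k (c₂) ≤ q k (c₁)`: increasing `c` makes the walk less likely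
to ever reach `0`. -/
theorem poisson_walk_hitting_prob_antitone_in_c
    (r : ℕ) (hr : 2 ≤ r) (c₁ c₂ : ℝ≥0) (hc₁ : 0 < c₁) (hc : c₁ ≤ c₂) (k : ℕ)
    {Ω₁ : Type} [MeasurableSpace Ω₁] (μ₁ : Measure Ω₁) [IsProbabilityMeasure μ₁]
    (ξ₁ : ℕ → Ω₁ → ℕ) (hmeas₁ : ∀ ℓ, Measurable (ξ₁ ℓ))
    (hindep₁ : iIndepFun ξ₁ μ₁)
    (hdist₁ : ∀ ℓ, 1 ≤ ℓ →
      μ₁.map (ξ₁ ℓ) = poissonMeasure ((Nat.choose (ℓ - 1) (r - 1) : ℝ≥0) * c₁ ^ r))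
    {Ω₂ : Type} [MeasurableSpace Ω₂] (μ₂ : Measure Ω₂) [IsProbabilityMeasure μ₂]
    (ξ₂ : ℕ → Ω₂ → ℕ) (hmeas₂ : ∀ ℓ, Measurable (ξ₂ ℓ))
    (hindep₂ : iIndepFun ξ₂ μ₂)
    (hdist₂ : ∀ ℓ, 1 ≤ ℓ →
      μ₂.map (ξ₂ ℓ) = poissonMeasure ((Nat.choose (ℓ - 1) (r - 1) : ℝ≥0) * c₂ ^ r)) :
    μ₂ {ω | ∃ ℓ ≥ 1, (k : ℤ) + ∑ j ∈ Finset.Icc 1 ℓ, ((ξ₂ j ω : ℤ) - 1) ≤ 0} ≤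
      μ₁ {ω | ∃ ℓ ≥ 1, (k : ℤ) + ∑ j ∈ Finset.Icc 1 ℓ, ((ξ₁ j ω : ℤ) - 1) ≤ 0} := by
  classical
  set Λ₁ : ℕ → ℝ≥0 := fun ℓ => (Nat.choose (ℓ - 1) (r - 1) : ℝ≥0) * c₁ ^ r with hΛ₁
  set Λ₂ : ℕ → ℝ≥0 := fun ℓ => (Nat.choose (ℓ - 1) (r - 1) : ℝ≥0) * c₂ ^ r with hΛ₂
  have key : ∀ {Ω : Type} [MeasurableSpace Ω] (μ : Measure Ω) [IsProbabilityMeasure μ]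
      (ξ : ℕ → Ω → ℕ) (_ : ∀ ℓ, Measurable (ξ ℓ))
      (_ : iIndepFun ξ μ) (Λ : ℕ → ℝ≥0)
      (_ : ∀ ℓ, 1 ≤ ℓ → μ.map (ξ ℓ) = poissonMeasure (Λ ℓ)),
      μ {ω | ∃ ℓ ≥ 1, (k : ℤ) + ∑ j ∈ Finset.Icc 1 ℓ, ((ξ j ω : ℤ) - 1) ≤ 0}
        = ⨆ L : ℕ, pQ (fun i : Fin L => Λ ((i : ℕ) + 1)) (hitSet k L) := by
    intro Ω _ μ _ ξ hmeas hindep Λ hdist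
    have hE : {ω | ∃ ℓ ≥ 1, (k : ℤ) + ∑ j ∈ Finset.Icc 1 ℓ, ((ξ j ω : ℤ) - 1) ≤ 0}
        = ⋃ L : ℕ, (fun ω (i : Fin L) => ξ ((i : ℕ) + 1) ω) ⁻¹' (hitSet k L) := by
      ext ω
      simp only [Set.mem_setOf_eq, Set.mem_iUnion, preimage_hitSet_char]
      constructor
      · rintro ⟨ℓ, h1, h3⟩
        exact ⟨ℓ, ℓ, h1, le_refl _, h3⟩
      · rintro ⟨L, ℓ, h1, _, h3⟩
        exact ⟨ℓ, h1, h3⟩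
    have hmono : Monotone (fun L : ℕ =>
        (fun ω (i : Fin L) => ξ ((i : ℕ) + 1) ω) ⁻¹' (hitSet k L)) := by
      intro L L' hLL
      simp only [preimage_hitSet_char]
      rintro ω ⟨ℓ, h1, h2, h3⟩
      exact ⟨ℓ, h1, le_trans h2 hLL, h3⟩
    rw [hE, hmono.measure_iUnion]
    congr 1
    funext L
    exact measure_pre_eq_pQ μ ξ hmeas hindep Λ hdist L (hitSet k L)
  rw [key μ₁ ξ₁ hmeas₁ hindep₁ Λ₁ hdist₁, key μ₂ ξ₂ hmeas₂ hindep₂ Λ₂ hdist₂]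
  apply iSup_mono
  intro L
  apply pQ_anti
  · intro i
    simp only [hΛ₁, hΛ₂]
    exact mul_le_mul_of_nonneg_left (pow_le_pow_left₀ (zero_le : (0:ℝ≥0) ≤ c₁) hc r) zero_le
  · exact hitSet_down k L
end

section
/- Let r ≥ 2 be an integer, (X_n) a sequence of positive integers with X_n/n → a for some real a > 0, and (p_n) ⊂ (0,1) a sequence with n^{1+1/r}·p_n → ∞ and n·p_n → 0. Then n·C(X_n, r)·p_n^r·(1−p_n)^{X_n − r} → ∞ as n → ∞; consequently n·Pr(Binomial(X_n, p_n) ≥ r) → ∞. -/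
open Filter
open scoped Topology

/-- The probability that a `Binomial (m, p)` random variable is at least `r`:
`∑_{k=r}^{m} C(m,k) p^k (1-p)^{m-k}`. -/
noncomputable def binomialProbGE (m : ℕ) (p : ℝ) (r : ℕ) : ℝ :=
  ∑ k ∈ Finset.Icc r m, (m.choose k : ℝ) * p ^ k * (1 - p) ^ (m - k)

/-- Let `r ≥ 2`, `(X n)` positive integers with `X n / n → a > 0`, and
`p n ∈ (0,1)` with `n^{1+1/r} * p n → ∞` and `n * p n → 0`. Then
`n * C(X n, r) * (p n)^r * (1 - p n)^(X n - r) → ∞`, and consequently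
`n * Pr(Binomial (X n, p n) ≥ r) → ∞`. -/
theorem tendsto_atTop_n_mul_binomial_term
    (r : ℕ) (hr : 2 ≤ r) (X : ℕ → ℕ) (hX : ∀ n, 0 < X n)
    (a : ℝ) (ha : 0 < a)
    (hXa : Tendsto (fun n : ℕ => (X n : ℝ) / (n : ℝ)) atTop (𝓝 a))
    (p : ℕ → ℝ) (hp : ∀ n, p n ∈ Set.Ioo (0 : ℝ) 1)
    (h1 : Tendsto (fun n : ℕ => (n : ℝ) ^ ((1 : ℝ) + 1 / (r : ℝ)) * p n) atTop atTop)
    (h2 : Tendsto (fun n : ℕ => (n : ℝ) * p n) atTop (𝓝 0)) :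
    Tendsto (fun n : ℕ =>
        (n : ℝ) * ((X n).choose r : ℝ) * (p n) ^ r * (1 - p n) ^ (X n - r)) atTop atTop ∧
    Tendsto (fun n : ℕ => (n : ℝ) * binomialProbGE (X n) (p n) r) atTop atTop := by
  have hr0 : (0:ℕ) < r := by omega
  -- eventually X n ≥ (a/2) * n
  have hA : ∀ᶠ n : ℕ in atTop, (a/2) * n ≤ (X n : ℝ) := by
    have h := hXa.eventually (eventually_gt_nhds (show a/2 < a by linarith))
    filter_upwards [h, eventually_gt_atTop 0] with n hn hn0
    have hn0' : (0:ℝ) < n := by exact_mod_cast hn0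
    rw [lt_div_iff₀ hn0'] at hn
    linarith
  -- X n * p n → 0
  have hXp : Tendsto (fun n : ℕ => (X n : ℝ) * p n) atTop (𝓝 0) := by
    have h := hXa.mul h2
    rw [mul_zero] at h
    apply h.congr'
    filter_upwards [eventually_gt_atTop 0] with n hn0
    have hn0' : (0:ℝ) ≠ n := by exact_mod_cast hn0.ne
    field_simp
  -- eventually X n * p n ≤ 1/2
  have hB : ∀ᶠ n : ℕ in atTop, (X n : ℝ) * p n ≤ 1/2 :=
    hXp.eventually (eventually_le_nhds (by norm_num : (0:ℝ) < 1/2))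
  -- eventually (r : ℝ) ≤ (a/4) * n
  have hC : ∀ᶠ n : ℕ in atTop, (r : ℝ) ≤ (a/4) * n := by
    have : Tendsto (fun n : ℕ => (a/4) * n) atTop atTop :=
      (tendsto_natCast_atTop_atTop).const_mul_atTop (by linarith)
    exact this.eventually_ge_atTop _
  -- the dominating function
  set c : ℝ := (a/4)^r / (2 * (r.factorial : ℝ)) with hc
  have hcpos : 0 < c := by
    apply div_pos (pow_pos (by linarith) r)
    positivity
  have hgt : Tendsto (fun n : ℕ => c * ((n : ℝ) ^ ((1 : ℝ) + 1 / (r : ℝ)) * p n) ^ r)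
      atTop atTop := by
    exact ((tendsto_pow_atTop hr0.ne').comp h1).const_mul_atTop hcpos
  -- key eventual inequality
  have key : ∀ᶠ n : ℕ in atTop,
      c * ((n : ℝ) ^ ((1 : ℝ) + 1 / (r : ℝ)) * p n) ^ r ≤
        (n : ℝ) * ((X n).choose r : ℝ) * (p n) ^ r * (1 - p n) ^ (X n - r) := by
    filter_upwards [hA, hB, hC, eventually_gt_atTop 0] with n hAn hBn hCn hn0
    have hn0' : (0:ℝ) < n := by exact_mod_cast hn0
    obtain ⟨hp0, hp1⟩ := hp n
    have hrX : (r : ℝ) ≤ (X n : ℝ) := le_trans hCn (by linarith)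
    have hrXn : r ≤ X n := by exact_mod_cast hrX
    -- (1 - p)^(X-r) ≥ 1/2
    have hq : (1:ℝ)/2 ≤ (1 - p n) ^ (X n - r) := by
      have hb := one_add_mul_le_pow (a := -(p n)) (by linarith) (X n - r)
      rw [← sub_eq_add_neg] at hb
      have hle : ((X n - r : ℕ) : ℝ) * p n ≤ 1/2 := by
        have h' : ((X n - r : ℕ) : ℝ) ≤ (X n : ℝ) := by exact_mod_cast Nat.sub_le _ _
        nlinarith
      have heq : ((X n - r : ℕ) : ℝ) * -(p n) = -(((X n - r : ℕ) : ℝ) * p n) := by ring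
      rw [heq] at hb
      linarith
    -- choose bound
    have h4n : (0:ℝ) ≤ (a/4) * n := mul_nonneg (by linarith) hn0'.le
    have hch : ((a/4) * n) ^ r / (r.factorial : ℝ) ≤ ((X n).choose r : ℝ) := by
      have h := Nat.pow_le_choose (α := ℝ) r (X n)
      refine le_trans ?_ h
      gcongr
      all_goals first
        | exact h4n
        | (rw [Nat.cast_sub (by omega)]; push_cast; linarith)
    -- rewrite LHS
    have hrw : c * ((n : ℝ) ^ ((1 : ℝ) + 1 / (r : ℝ)) * p n) ^ r =
        (n : ℝ) * (((a/4) * n) ^ r / (r.factorial : ℝ)) * (p n) ^ r * (1/2) := by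
      have hnpow : ((n : ℝ) ^ ((1 : ℝ) + 1 / (r : ℝ))) ^ r = (n : ℝ) ^ (r + 1) := by
        rw [← Real.rpow_natCast ((n:ℝ) ^ ((1:ℝ) + 1/(r:ℝ))) r, ← Real.rpow_natCast (n:ℝ) (r+1),
          ← Real.rpow_mul hn0'.le]
        congr 1
        have : (r : ℝ) ≠ 0 := by positivity
        field_simp
        norm_cast
      rw [mul_pow, hnpow, hc]
      rw [mul_pow, pow_succ]
      have hfac : ((r.factorial : ℝ)) ≠ 0 := by positivity
      field_simp
    rw [hrw]
    have hfac : (0:ℝ) < (r.factorial : ℝ) := by positivity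
    have hbnd : (0:ℝ) ≤ ((a/4) * n) ^ r / (r.factorial : ℝ) :=
      div_nonneg (pow_nonneg h4n r) hfac.le
    gcongr
    all_goals first
      | exact hbnd
      | exact hn0'.le
      | exact hch
      | exact hq
      | positivity
  have first : Tendsto (fun n : ℕ =>
      (n : ℝ) * ((X n).choose r : ℝ) * (p n) ^ r * (1 - p n) ^ (X n - r)) atTop atTop :=
    tendsto_atTop_mono' _ key hgt
  refine ⟨first, ?_⟩
  -- second part
  have hrX : ∀ᶠ n : ℕ in atTop, r ≤ X n := by
    filter_upwards [hA, hC] with n hAn hCn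
    have : (r:ℝ) ≤ (X n : ℝ) := le_trans hCn (by linarith)
    exact_mod_cast this
  apply tendsto_atTop_mono' _ _ first
  filter_upwards [hrX] with n hn
  have hsum : ((X n).choose r : ℝ) * (p n) ^ r * (1 - p n) ^ (X n - r) ≤
      binomialProbGE (X n) (p n) r := by
    unfold binomialProbGE
    apply Finset.single_le_sum (f := fun k =>
      ((X n).choose k : ℝ) * (p n) ^ k * (1 - p n) ^ (X n - k))
    · intro i _
      obtain ⟨hp0, hp1⟩ := hp n
      exact mul_nonneg (mul_nonneg (by positivity) (by positivity))
        (pow_nonneg (by linarith) _)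
    · simpa using hn
  calc (n : ℝ) * ((X n).choose r : ℝ) * (p n) ^ r * (1 - p n) ^ (X n - r)
      = (n:ℝ) * (((X n).choose r : ℝ) * (p n) ^ r * (1 - p n) ^ (X n - r)) := by ring
    _ ≤ (n:ℝ) * binomialProbGE (X n) (p n) r :=
        mul_le_mul_of_nonneg_left hsum (Nat.cast_nonneg n)
end

section
/- Let r ≥ 2 be an integer and a, b > 0 reals. Let (X_n) and (m_n) be sequences of positive integers with X_n/n → a and m_n/n → b, and let (p_n) ⊂ (0,1) satisfy n^{1+1/r}·p_n → ∞ and n·p_n → 0. For each n, let π_n = Pr(Binomial(X_n, p_n) ≥ r), and let Y_n be a random variable with the Binomial(m_n, π_n) distribution (Y_n is the number, among m_n vertices each of which independently has a Binomial(X_n, p_n)-distributed number of infected neighbors, of vertices with at least r infected neighbors). Then for every M > 0, Pr(Y_n ≥ M) → 1 as n → ∞. -/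
open Filter
open scoped Topology

lemma full_binomial_sum (m : ℕ) (q : ℝ) :
    ∑ k ∈ Finset.range (m + 1), (m.choose k : ℝ) * q ^ k * (1 - q) ^ (m - k) = 1 := by
  calc ∑ k ∈ Finset.range (m + 1), (m.choose k : ℝ) * q ^ k * (1 - q) ^ (m - k)
      = ∑ k ∈ Finset.range (m + 1), q ^ k * (1 - q) ^ (m - k) * (m.choose k : ℝ) :=
        Finset.sum_congr rfl fun k _ => by ring
    _ = (q + (1 - q)) ^ m := (add_pow q (1 - q) m).symm
    _ = 1 := by norm_num

lemma bge_nonneg {m : ℕ} {q : ℝ} (h0 : 0 ≤ q) (h1 : q ≤ 1) (r : ℕ) :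
    0 ≤ binomialProbGE m q r :=
  Finset.sum_nonneg fun k _ =>
    mul_nonneg (mul_nonneg (Nat.cast_nonneg _) (pow_nonneg h0 _))
      (pow_nonneg (by linarith) _)

lemma bge_le_one {m : ℕ} {q : ℝ} (h0 : 0 ≤ q) (h1 : q ≤ 1) (r : ℕ) :
    binomialProbGE m q r ≤ 1 := by
  rw [← full_binomial_sum m q]
  apply Finset.sum_le_sum_of_subset_of_nonneg
  · intro k hk
    simp only [Finset.mem_Icc] at hk
    simp only [Finset.mem_range]
    omega
  · intro k _ _
    exact mul_nonneg (mul_nonneg (Nat.cast_nonneg _) (pow_nonneg h0 _))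
      (pow_nonneg (by linarith) _)

lemma bge_single_le {mm r : ℕ} {q : ℝ} (h0 : 0 ≤ q) (h1 : q ≤ 1) (hrm : r ≤ mm) :
    (mm.choose r : ℝ) * q ^ r * (1 - q) ^ (mm - r) ≤ binomialProbGE mm q r :=
  Finset.single_le_sum
    (f := fun k => (mm.choose k : ℝ) * q ^ k * (1 - q) ^ (mm - k))
    (fun k _ => mul_nonneg (mul_nonneg (Nat.cast_nonneg _) (pow_nonneg h0 _))
      (pow_nonneg (by linarith) _))
    (Finset.mem_Icc.2 ⟨le_rfl, hrm⟩)

/-- Let `r ≥ 2` and `a, b > 0`. Let `(X n)`, `(m n)` be positive integers with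
`X n / n → a` and `m n / n → b`, and let `p n ∈ (0,1)` satisfy `n^{1+1/r} * p n → ∞` and
`n * p n → 0`. Set `π n = Pr(Binomial (X n, p n) ≥ r)` and let `Y n ~ Binomial (m n, π n)`.
Then for every `M > 0`, `Pr (Y n ≥ M) → 1`, where `Pr (Y n ≥ M)` is written out as
`∑_{k=0}^{m n} [M ≤ k] C(m n, k) (π n)^k (1 - π n)^(m n - k)`. -/
theorem binomial_of_binomial_tail_tendsto_one
    (r : ℕ) (hr : 2 ≤ r) (a b : ℝ) (ha : 0 < a) (hb : 0 < b)
    (X m : ℕ → ℕ) (hX : ∀ n, 0 < X n) (hm : ∀ n, 0 < m n)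
    (hXa : Tendsto (fun n : ℕ => (X n : ℝ) / (n : ℝ)) atTop (𝓝 a))
    (hmb : Tendsto (fun n : ℕ => (m n : ℝ) / (n : ℝ)) atTop (𝓝 b))
    (p : ℕ → ℝ) (hp : ∀ n, p n ∈ Set.Ioo (0 : ℝ) 1)
    (h1 : Tendsto (fun n : ℕ => (n : ℝ) ^ ((1 : ℝ) + 1 / (r : ℝ)) * p n) atTop atTop)
    (h2 : Tendsto (fun n : ℕ => (n : ℝ) * p n) atTop (𝓝 0)) :
    ∀ M : ℝ, 0 < M →
      Tendsto (fun n : ℕ => ∑ k ∈ Finset.range (m n + 1),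
          if M ≤ (k : ℝ) then
            ((m n).choose k : ℝ) * (binomialProbGE (X n) (p n) r) ^ k *
              (1 - binomialProbGE (X n) (p n) r) ^ (m n - k)
          else 0) atTop (𝓝 1) := by
  intro M hM
  have hp0 : ∀ n, 0 ≤ p n := fun n => (hp n).1.le
  have hp1 : ∀ n, p n ≤ 1 := fun n => (hp n).2.le
  set π : ℕ → ℝ := fun n => binomialProbGE (X n) (p n) r with hπdef
  have hπ0 : ∀ n, 0 ≤ π n := fun n => bge_nonneg (hp0 n) (hp1 n) r
  have hπ1 : ∀ n, π n ≤ 1 := fun n => bge_le_one (hp0 n) (hp1 n) r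
  have hr0 : (r : ℝ) ≠ 0 := Nat.cast_ne_zero.2 (by omega)
  -- X n → ∞
  have hXtop : Tendsto (fun n => (X n : ℝ)) atTop atTop := by
    have h := hXa.pos_mul_atTop ha tendsto_natCast_atTop_atTop
    apply h.congr'
    filter_upwards [eventually_ge_atTop 1] with n hn
    have : (n : ℝ) ≠ 0 := by positivity
    field_simp
  have hrX : ∀ᶠ n in atTop, r ≤ X n := by
    filter_upwards [hXtop.eventually_ge_atTop (r : ℝ)] with n hn
    exact_mod_cast hn
  -- X n * p n → 0
  have hXp : Tendsto (fun n => (X n : ℝ) * p n) atTop (𝓝 0) := by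
    have h := hXa.mul h2
    rw [mul_zero] at h
    apply h.congr'
    filter_upwards [eventually_ge_atTop 1] with n hn
    have : (n : ℝ) ≠ 0 := by positivity
    field_simp
  -- (1 - p n) ^ X n → 1
  have h1mp : Tendsto (fun n => (1 - p n) ^ (X n)) atTop (𝓝 1) := by
    have hlow : Tendsto (fun n => 1 - (X n : ℝ) * p n) atTop (𝓝 1) := by
      simpa using tendsto_const_nhds.sub hXp
    refine tendsto_of_tendsto_of_tendsto_of_le_of_le hlow tendsto_const_nhds
      (fun n => ?_) (fun n => ?_)
    · have := one_add_mul_le_pow (a := -(p n)) (by linarith [hp1 n]) (X n)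
      calc 1 - (X n : ℝ) * p n = 1 + (X n : ℝ) * (-(p n)) := by ring
        _ ≤ (1 + -(p n)) ^ (X n) := this
        _ = (1 - p n) ^ (X n) := by ring_nf
    · exact pow_le_one₀ (by linarith [hp1 n]) (by linarith [hp0 n])
  -- q n ^ r = n ^ (r+1) * p n ^ r
  set q : ℕ → ℝ := fun n => (n : ℝ) ^ ((1 : ℝ) + 1 / (r : ℝ)) * p n with hqdef
  have hq : ∀ n : ℕ, q n ^ r = (n : ℝ) ^ (r + 1) * p n ^ r := by
    intro n
    rw [mul_pow]
    congr 1
    rw [← Real.rpow_natCast ((n : ℝ) ^ ((1 : ℝ) + 1 / (r : ℝ))) r,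
      ← Real.rpow_mul (Nat.cast_nonneg n), ← Real.rpow_natCast (n : ℝ) (r + 1)]
    congr 1
    push_cast
    field_simp
  have hqr : Tendsto (fun n => q n ^ r) atTop atTop :=
    (tendsto_pow_atTop (by omega : r ≠ 0)).comp h1
  -- the auxiliary lower bound for m n * π n
  set g : ℕ → ℝ := fun n =>
    (m n : ℝ) / n * (((X n : ℝ) - r + 1) / n) ^ r * (1 - p n) ^ (X n) with hgdef
  have hg : Tendsto g atTop (𝓝 (b * a ^ r * 1)) := by
    refine Tendsto.mul (Tendsto.mul hmb ?_) h1mp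
    have : Tendsto (fun n : ℕ => (X n : ℝ) / n - ((r : ℝ) - 1) / n) atTop (𝓝 (a - 0)) :=
      hXa.sub (tendsto_const_div_atTop_nhds_zero_nat _)
    rw [sub_zero] at this
    refine (this.pow r).congr fun n => ?_
    congr 1
    ring
  have hgpos : (0 : ℝ) < b * a ^ r * 1 := by positivity
  have hF : Tendsto (fun n => q n ^ r * g n / (r.factorial : ℝ)) atTop atTop :=
    (hqr.atTop_mul_pos hgpos hg).atTop_div_const (by positivity)
  have hkey : ∀ᶠ n in atTop, q n ^ r * g n / (r.factorial : ℝ) ≤ (m n : ℝ) * π n := by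
    filter_upwards [eventually_ge_atTop 1, hrX] with n hn hrXn
    have hn0 : (n : ℝ) ≠ 0 := by positivity
    have hcast : ((X n + 1 - r : ℕ) : ℝ) = (X n : ℝ) - r + 1 := by
      rw [Nat.cast_sub (by omega)]
      push_cast
      ring
    have hid : q n ^ r * g n / (r.factorial : ℝ) =
        (m n : ℝ) * (((X n + 1 - r : ℕ) : ℝ) ^ r * p n ^ r * (1 - p n) ^ (X n) / (r.factorial : ℝ)) := by
      rw [hq, hcast]
      simp only [hgdef]
      field_simp
      rw [div_pow, pow_succ]
      field_simp
    rw [hid]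
    have hstep : ((X n + 1 - r : ℕ) : ℝ) ^ r * p n ^ r * (1 - p n) ^ (X n) / (r.factorial : ℝ) ≤ π n := by
      have hdesc : ((X n + 1 - r : ℕ) : ℝ) ^ r ≤ (r.factorial : ℝ) * ((X n).choose r : ℝ) := by
        have := Nat.pow_sub_le_descFactorial (X n) r
        rw [Nat.descFactorial_eq_factorial_mul_choose] at this
        exact_mod_cast this
      have hppow : (1 - p n) ^ (X n) ≤ (1 - p n) ^ (X n - r) :=
        pow_le_pow_of_le_one (by linarith [hp1 n]) (by linarith [hp0 n]) (Nat.sub_le _ _)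
      have h1p : (0 : ℝ) ≤ 1 - p n := by linarith [hp1 n]
      have hnum : ((X n + 1 - r : ℕ) : ℝ) ^ r * p n ^ r * (1 - p n) ^ (X n) ≤
          (r.factorial : ℝ) * ((X n).choose r : ℝ) * p n ^ r * (1 - p n) ^ (X n - r) :=
        mul_le_mul (mul_le_mul_of_nonneg_right hdesc (pow_nonneg (hp0 n) r)) hppow
          (pow_nonneg h1p _)
          (mul_nonneg (mul_nonneg (by positivity) (Nat.cast_nonneg _)) (pow_nonneg (hp0 n) r))
      calc ((X n + 1 - r : ℕ) : ℝ) ^ r * p n ^ r * (1 - p n) ^ (X n) / (r.factorial : ℝ)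
          ≤ (r.factorial : ℝ) * ((X n).choose r : ℝ) * p n ^ r * (1 - p n) ^ (X n - r)
              / (r.factorial : ℝ) :=
            div_le_div_of_nonneg_right hnum (by positivity)
        _ = ((X n).choose r : ℝ) * p n ^ r * (1 - p n) ^ (X n - r) := by
            have hf0 : (r.factorial : ℝ) ≠ 0 := by positivity
            field_simp
        _ ≤ π n := bge_single_le (hp0 n) (hp1 n) hrXn
    exact mul_le_mul_of_nonneg_left hstep (Nat.cast_nonneg _)
  have hmπ : Tendsto (fun n => (m n : ℝ) * π n) atTop atTop :=
    tendsto_atTop_mono' atTop hkey hF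
  -- the lower tail
  set K : ℕ := ⌈M⌉₊ with hKdef
  have hMK : M ≤ (K : ℝ) := Nat.le_ceil M
  set term : ℕ → ℕ → ℝ := fun n k =>
    ((m n).choose k : ℝ) * π n ^ k * (1 - π n) ^ (m n - k) with htermdef
  have hterm0 : ∀ n k, 0 ≤ term n k := fun n k =>
    mul_nonneg (mul_nonneg (Nat.cast_nonneg _) (pow_nonneg (hπ0 n) _))
      (pow_nonneg (by linarith [hπ1 n]) _)
  set R : ℕ → ℝ := fun n =>
    ∑ k ∈ Finset.range (m n + 1), if M ≤ (k : ℝ) then 0 else term n k with hRdef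
  have hSR : ∀ n, (∑ k ∈ Finset.range (m n + 1),
      if M ≤ (k : ℝ) then term n k else 0) = 1 - R n := by
    intro n
    have : (∑ k ∈ Finset.range (m n + 1), if M ≤ (k : ℝ) then term n k else 0) + R n
        = 1 := by
      rw [hRdef, ← Finset.sum_add_distrib]
      rw [Finset.sum_congr rfl (fun k _ => by
        split_ifs <;> simp : ∀ k ∈ Finset.range (m n + 1),
          ((if M ≤ (k : ℝ) then term n k else 0) + if M ≤ (k : ℝ) then 0 else term n k)
            = term n k)]
      exact full_binomial_sum (m n) (π n)
    linarith
  have hR0 : ∀ n, 0 ≤ R n := fun n =>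
    Finset.sum_nonneg fun k _ => by
      split_ifs
      · exact le_refl _
      · exact hterm0 n k
  set B : ℕ → ℝ := fun n =>
    ((K : ℝ) + 1) * Real.exp K * (((m n : ℝ) * π n) ^ K * Real.exp (-((m n : ℝ) * π n)))
    with hBdef
  have hRB : ∀ᶠ n in atTop, R n ≤ B n := by
    filter_upwards [hmπ.eventually_ge_atTop 1] with n ht
    set t : ℝ := (m n : ℝ) * π n with htdef
    have ht0 : 0 ≤ t := le_trans zero_le_one ht
    have hc0 : 0 ≤ t ^ K * Real.exp (-t) * Real.exp K := by positivity
    have hbound : ∀ k ∈ Finset.range (m n + 1), ¬ M ≤ (k : ℝ) →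
        term n k ≤ t ^ K * Real.exp (-t) * Real.exp K := by
      intro k hk hkM
      rw [Finset.mem_range] at hk
      have hkm : k ≤ m n := by omega
      have hkK : k ≤ K := by
        have : (k : ℝ) < (K : ℝ) := lt_of_not_ge hkM |>.trans_le hMK
        exact_mod_cast this.le
      have h1π : (0 : ℝ) ≤ 1 - π n := by linarith [hπ1 n]
      have hchoose : (((m n).choose k : ℕ) : ℝ) ≤ (m n : ℝ) ^ k := by
        exact_mod_cast Nat.choose_le_pow (m n) k
      calc term n k ≤ (m n : ℝ) ^ k * π n ^ k * (1 - π n) ^ (m n - k) := by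
            exact mul_le_mul_of_nonneg_right
              (mul_le_mul_of_nonneg_right hchoose (pow_nonneg (hπ0 n) k))
              (pow_nonneg h1π _)
        _ = t ^ k * (1 - π n) ^ (m n - k) := by rw [htdef, mul_pow]
        _ ≤ t ^ K * (1 - π n) ^ (m n - k) :=
            mul_le_mul_of_nonneg_right (pow_le_pow_right₀ ht hkK)
              (pow_nonneg h1π _)
        _ ≤ t ^ K * Real.exp (-(π n)) ^ (m n - k) :=
            mul_le_mul_of_nonneg_left
              (pow_le_pow_left₀ h1π (by linarith [Real.add_one_le_exp (-(π n))]) _)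
              (pow_nonneg ht0 K)
        _ = t ^ K * Real.exp (((m n - k : ℕ) : ℝ) * (-(π n))) := by
            rw [← Real.exp_nat_mul]
        _ ≤ t ^ K * Real.exp (-t + K) := by
            apply mul_le_mul_of_nonneg_left _ (pow_nonneg ht0 K)
            apply Real.exp_le_exp.2
            have hms : ((m n - k : ℕ) : ℝ) = (m n : ℝ) - k := by
              rw [Nat.cast_sub hkm]
            have hkπ : (k : ℝ) * π n ≤ (K : ℝ) := by
              calc (k : ℝ) * π n ≤ (k : ℝ) * 1 :=
                    mul_le_mul_of_nonneg_left (hπ1 n) (Nat.cast_nonneg k)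
                _ = (k : ℝ) := mul_one _
                _ ≤ (K : ℝ) := by exact_mod_cast hkK
            rw [hms, htdef]
            nlinarith [hπ0 n]
        _ = t ^ K * Real.exp (-t) * Real.exp K := by
            rw [Real.exp_add]; ring
    have hsub : (Finset.range (m n + 1)).filter (fun k : ℕ => ¬ M ≤ (k : ℝ))
        ⊆ Finset.range (K + 1) := by
      intro k hk
      rw [Finset.mem_filter] at hk
      rw [Finset.mem_range]
      have : (k : ℝ) < (K : ℝ) := lt_of_not_ge hk.2 |>.trans_le hMK
      have : k < K := by exact_mod_cast this
      omega
    calc R n = ∑ k ∈ (Finset.range (m n + 1)).filter (fun k : ℕ => ¬ M ≤ (k : ℝ)),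
          term n k := by
          rw [hRdef, Finset.sum_filter]
          exact (Finset.sum_congr rfl fun k _ => by split_ifs <;> simp).symm
      _ ≤ ∑ _k ∈ (Finset.range (m n + 1)).filter (fun k : ℕ => ¬ M ≤ (k : ℝ)),
          (t ^ K * Real.exp (-t) * Real.exp K) := by
          apply Finset.sum_le_sum
          intro k hk
          rw [Finset.mem_filter] at hk
          exact hbound k hk.1 hk.2
      _ = ((Finset.range (m n + 1)).filter (fun k : ℕ => ¬ M ≤ (k : ℝ))).card
            * (t ^ K * Real.exp (-t) * Real.exp K) := by
          rw [Finset.sum_const, nsmul_eq_mul]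
      _ ≤ ((K : ℝ) + 1) * (t ^ K * Real.exp (-t) * Real.exp K) := by
          apply mul_le_mul_of_nonneg_right _ hc0
          have := Finset.card_le_card hsub
          rw [Finset.card_range] at this
          exact_mod_cast this
      _ = B n := by rw [hBdef]; ring
  have hB0 : Tendsto B atTop (𝓝 0) := by
    have hcomp : Tendsto (fun n => ((m n : ℝ) * π n) ^ K * Real.exp (-((m n : ℝ) * π n)))
        atTop (𝓝 0) := (Real.tendsto_pow_mul_exp_neg_atTop_nhds_zero K).comp hmπ
    have := hcomp.const_mul (((K : ℝ) + 1) * Real.exp K)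
    rw [mul_zero] at this
    exact this
  have hRtendsto : Tendsto R atTop (𝓝 0) :=
    squeeze_zero' (Eventually.of_forall hR0) hRB hB0
  have hgoal : Tendsto (fun n => 1 - R n) atTop (𝓝 1) := by
    simpa using tendsto_const_nhds.sub hRtendsto
  refine hgoal.congr fun n => ?_
  exact (hSR n).symm
end

section
/- Fix an integer K ≥ 0. Let (p_n) ⊂ (0,1) be a sequence with n·p_n → ∞ and p_n → 0, and for n > K set p̄_n = (1 − K/n)·p_n + K/n. Then the total variation distance between the law of K + B_n, where B_n ~ Binomial(n−K, p_n), and the law Binomial(n, p̄_n) tends to 0 as n → ∞. -/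
open Filter Finset
open scoped Topology

set_option maxHeartbeats 1000000

/-- The probability mass function of the `Binomial (m, p)` distribution:
`k ↦ C(m,k) p^k (1-p)^(m-k)` (which vanishes for `k > m`). -/
noncomputable def binomialPmf (m : ℕ) (p : ℝ) (k : ℕ) : ℝ :=
  (m.choose k : ℝ) * p ^ k * (1 - p) ^ (m - k)

lemma binom_nonneg {m : ℕ} {p : ℝ} (h0 : 0 ≤ p) (h1 : p ≤ 1) (k : ℕ) :
    0 ≤ binomialPmf m p k :=
  mul_nonneg (mul_nonneg (by positivity) (pow_nonneg h0 k)) (pow_nonneg (by linarith) _)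

lemma binom_sum_one (m : ℕ) (p : ℝ) : ∑ k ∈ range (m+1), binomialPmf m p k = 1 := by
  calc ∑ k ∈ range (m+1), binomialPmf m p k
      = ∑ k ∈ range (m+1), p ^ k * (1-p) ^ (m-k) * (m.choose k : ℝ) :=
        Finset.sum_congr rfl (fun k _ => by unfold binomialPmf; ring)
    _ = (p + (1-p)) ^ m := (add_pow p (1-p) m).symm
    _ = 1 := by norm_num

lemma binom_mean (m : ℕ) (p : ℝ) :
    ∑ k ∈ range (m+1), (k:ℝ) * binomialPmf m p k = m * p := by
  cases m with
  | zero => simp [binomialPmf]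
  | succ m =>
    rw [Finset.sum_range_succ']
    simp only [Nat.cast_zero, zero_mul, add_zero]
    push_cast
    have key : ∀ i ∈ range (m+1), ((i:ℝ)+1) * binomialPmf (m+1) p (i+1)
        = ((m:ℝ)+1) * p * binomialPmf m p i := by
      intro i hi
      unfold binomialPmf
      have hc : (m+1) * m.choose i = (m+1).choose (i+1) * (i+1) := Nat.add_one_mul_choose_eq m i
      have hc' : ((m:ℝ)+1) * (m.choose i : ℝ) = ((m+1).choose (i+1) : ℝ) * ((i:ℝ)+1) := by
        exact_mod_cast congrArg (Nat.cast (R := ℝ)) hc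
      have hsub : m + 1 - (i+1) = m - i := by omega
      rw [hsub, pow_succ]
      linear_combination (p ^ i * p * (1 - p) ^ (m - i)) * hc'.symm
    calc ∑ i ∈ range (m+1), ((i:ℝ)+1) * binomialPmf (m+1) p (i+1)
        = ∑ i ∈ range (m+1), ((m:ℝ)+1) * p * binomialPmf m p i := Finset.sum_congr rfl key
      _ = ((m:ℝ)+1) * p * 1 := by rw [← Finset.mul_sum, binom_sum_one]
      _ = ((m:ℝ)+1) * p := by ring

lemma binom_fact2 (m : ℕ) (p : ℝ) :
    ∑ k ∈ range (m+1), (k:ℝ) * ((k:ℝ)-1) * binomialPmf m p k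
      = (m:ℝ) * ((m:ℝ)-1) * p^2 := by
  match m with
  | 0 => simp [binomialPmf]
  | 1 => simp [Finset.sum_range_succ, binomialPmf]
  | (m+2) =>
    rw [Finset.sum_range_succ', Finset.sum_range_succ']
    push_cast
    have key : ∀ j ∈ range (m+1), ((j:ℝ)+1+1) * ((j:ℝ)+1+1-1) * binomialPmf (m+2) p (j+1+1)
        = ((m:ℝ)+2) * ((m:ℝ)+1) * p^2 * binomialPmf m p j := by
      intro j hj
      unfold binomialPmf
      have hc1 : (m+2) * (m+1).choose (j+1) = (m+2).choose (j+2) * (j+2) :=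
        Nat.add_one_mul_choose_eq (m+1) (j+1)
      have hc2 : (m+1) * m.choose j = (m+1).choose (j+1) * (j+1) :=
        Nat.add_one_mul_choose_eq m j
      have hc1' : ((m:ℝ)+2) * ((m+1).choose (j+1) : ℝ) = ((m+2).choose (j+2) : ℝ) * ((j:ℝ)+2) := by
        exact_mod_cast congrArg (Nat.cast (R := ℝ)) hc1
      have hc2' : ((m:ℝ)+1) * (m.choose j : ℝ) = ((m+1).choose (j+1) : ℝ) * ((j:ℝ)+1) := by
        exact_mod_cast congrArg (Nat.cast (R := ℝ)) hc2
      have hsub : m + 2 - (j+1+1) = m - j := by omega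
      have hidx : j+1+1 = j+2 := rfl
      rw [hsub, hidx]
      have hp2 : p ^ (j+2) = p ^ j * p^2 := by ring
      rw [hp2]
      linear_combination (p^j * p^2 * (1-p)^(m-j)) *
        (((j:ℝ)+1) * hc1'.symm + ((m:ℝ)+2) * hc2'.symm)
    rw [Finset.sum_congr rfl key, ← Finset.mul_sum, binom_sum_one]
    ring

lemma binom_var (m : ℕ) (p : ℝ) :
    ∑ k ∈ range (m+1), ((k:ℝ) - m*p)^2 * binomialPmf m p k = m*p*(1-p) := by
  have h0 := binom_sum_one m p
  have h1 := binom_mean m p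
  have h2 := binom_fact2 m p
  have expand : ∀ k ∈ range (m+1), ((k:ℝ) - m*p)^2 * binomialPmf m p k
      = (k:ℝ)*((k:ℝ)-1) * binomialPmf m p k + (1 - 2*(m:ℝ)*p) * ((k:ℝ) * binomialPmf m p k)
        + ((m:ℝ)*p)^2 * binomialPmf m p k := by
    intro k _; ring
  rw [Finset.sum_congr rfl expand]
  rw [Finset.sum_add_distrib, Finset.sum_add_distrib, ← Finset.mul_sum, ← Finset.mul_sum,
    h0, h1, h2]
  ring

lemma choose_prod (m k : ℕ) : ∀ K : ℕ,
    (m+K).choose (k+K) * ∏ j ∈ range K, (k+1+j) = m.choose k * ∏ j ∈ range K, (m+1+j) := by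
  intro K
  induction K with
  | zero => simp
  | succ K ih =>
    have h : (m+K+1) * (m+K).choose (k+K) = (m+K+1).choose (k+K+1) * (k+K+1) :=
      Nat.add_one_mul_choose_eq (m+K) (k+K)
    have e1 : m + (K+1) = m + K + 1 := by omega
    have e2 : k + (K+1) = k + K + 1 := by omega
    rw [Finset.prod_range_succ, Finset.prod_range_succ, e1, e2]
    calc (m+K+1).choose (k+K+1) * ((∏ j ∈ range K, (k+1+j)) * (k+1+K))
        = ((m+K+1).choose (k+K+1) * (k+K+1)) * ∏ j ∈ range K, (k+1+j) := by
          rw [show k+1+K = k+K+1 from by omega]; ring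
      _ = ((m+K+1) * (m+K).choose (k+K)) * ∏ j ∈ range K, (k+1+j) := by rw [← h]
      _ = (m+K+1) * ((m+K).choose (k+K) * ∏ j ∈ range K, (k+1+j)) := by ring
      _ = (m+K+1) * (m.choose k * ∏ j ∈ range K, (m+1+j)) := by rw [ih]
      _ = m.choose k * ((∏ j ∈ range K, (m+1+j)) * (m+1+K)) := by
          rw [show m+1+K = m+K+1 from by omega]; ring

lemma pmf_decomp (K m k : ℕ) (p : ℝ) (hp1 : 0 < p) (hp2 : p < 1) (hk : k ≤ m) (hm : 0 < m) :
    binomialPmf (m+K) ((1 - (K:ℝ)/((m+K:ℕ):ℝ)) * p + (K:ℝ)/((m+K:ℕ):ℝ)) (K + k)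
      = binomialPmf m p k *
        ((∏ j ∈ range K, (((m:ℝ)+1+(j:ℝ)) *
            ((1 - (K:ℝ)/((m+K:ℕ):ℝ)) * p + (K:ℝ)/((m+K:ℕ):ℝ)) / ((k:ℝ)+1+(j:ℝ)))) *
         ((((1 - (K:ℝ)/((m+K:ℕ):ℝ)) * p + (K:ℝ)/((m+K:ℕ):ℝ)) / p) ^ k *
          ((m:ℝ)/((m+K:ℕ):ℝ)) ^ (m - k))) := by
  set N : ℝ := ((m+K:ℕ):ℝ) with hNdef
  set pb : ℝ := (1 - (K:ℝ)/N) * p + (K:ℝ)/N with hpbdef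
  have hNval : N = (m:ℝ) + (K:ℝ) := by rw [hNdef]; push_cast; ring
  have hN : (0:ℝ) < N := by rw [hNval]; have : (0:ℝ) < (m:ℝ) := by exact_mod_cast hm
                            positivity
  have hsub : m + K - (K+k) = m - k := by omega
  have hchoose : (((m+K).choose (K+k)) : ℝ) * (∏ j ∈ range K, ((k:ℝ)+1+(j:ℝ)))
      = ((m.choose k):ℝ) * ∏ j ∈ range K, ((m:ℝ)+1+(j:ℝ)) := by
    have h := congrArg (Nat.cast (R := ℝ)) (choose_prod m k K)
    push_cast at h
    rw [Nat.add_comm K k]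
    convert h using 2
  have hPk : (0:ℝ) < ∏ j ∈ range K, ((k:ℝ)+1+(j:ℝ)) :=
    Finset.prod_pos (fun j _ => by positivity)
  have h1pb : 1 - pb = (1-p) * ((m:ℝ)/N) := by
    rw [hpbdef, hNval]
    field_simp
    ring
  have hprod : ∏ j ∈ range K, (((m:ℝ)+1+(j:ℝ)) * pb / ((k:ℝ)+1+(j:ℝ)))
      = (∏ j ∈ range K, ((m:ℝ)+1+(j:ℝ))) * pb^K / ∏ j ∈ range K, ((k:ℝ)+1+(j:ℝ)) := by
    rw [Finset.prod_div_distrib, Finset.prod_mul_distrib, Finset.prod_const, Finset.card_range]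
  unfold binomialPmf
  rw [hsub, hprod, h1pb, mul_pow, show K + k = k + K from Nat.add_comm K k, pow_add, div_pow]
  have hCeq : (((m+K).choose (k+K)) : ℝ)
      = ((m.choose k):ℝ) * (∏ j ∈ range K, ((m:ℝ)+1+(j:ℝ))) / ∏ j ∈ range K, ((k:ℝ)+1+(j:ℝ)) := by
    rw [eq_div_iff hPk.ne']
    rw [Nat.add_comm k K]
    exact hchoose
  rw [hCeq]
  have hpk : p ^ k ≠ 0 := by positivity
  rw [div_pow]
  field_simp

lemma rho_bound (K m k : ℕ) (p t : ℝ) (hp1 : 0 < p) (hp2 : p < 1)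
    (hm : 0 < m) (hk : k ≤ m) (ht : 0 ≤ t)
    (hk1 : (m:ℝ)*p - t ≤ (k:ℝ)) (hk2 : (k:ℝ) ≤ (m:ℝ)*p + t)
    (hA : (K:ℝ)*(1-p) ≤ (((m:ℝ)+(K:ℝ))) * p) :
    1 - (K:ℝ)*(t+(K:ℝ))/((m:ℝ)*p)
      - ((K:ℝ)*(1-p)*(K:ℝ)/((m:ℝ)+(K:ℝ))
         + t*((K:ℝ)*(1-p)/(((m:ℝ)+(K:ℝ))*p) + (K:ℝ)/(m:ℝ))
         + ((m:ℝ)*p+t)*((K:ℝ)*(1-p)/(((m:ℝ)+(K:ℝ))*p))^2)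
    ≤ (∏ j ∈ range K, (((m:ℝ)+1+(j:ℝ)) *
          ((1 - (K:ℝ)/((m+K:ℕ):ℝ)) * p + (K:ℝ)/((m+K:ℕ):ℝ)) / ((k:ℝ)+1+(j:ℝ))))
        * ((((1 - (K:ℝ)/((m+K:ℕ):ℝ)) * p + (K:ℝ)/((m+K:ℕ):ℝ)) / p) ^ k
            * ((m:ℝ)/((m+K:ℕ):ℝ)) ^ (m - k)) := by
  have hM : (0:ℝ) < (m:ℝ) := by exact_mod_cast hm
  have hK0 : (0:ℝ) ≤ (K:ℝ) := Nat.cast_nonneg K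
  have hN : (0:ℝ) < (m:ℝ) + (K:ℝ) := by linarith
  have hNval : ((m+K:ℕ):ℝ) = (m:ℝ) + (K:ℝ) := by push_cast; ring
  rw [hNval]
  obtain ⟨N, hNdef⟩ : ∃ N : ℝ, N = (m:ℝ) + (K:ℝ) := ⟨_, rfl⟩
  rw [← hNdef]
  rw [← hNdef] at hN hA
  obtain ⟨pb, hpbdef⟩ : ∃ pb : ℝ, pb = (1 - (K:ℝ)/N) * p + (K:ℝ)/N := ⟨_, rfl⟩
  rw [← hpbdef]
  obtain ⟨a, hadef⟩ : ∃ a : ℝ, a = (K:ℝ)*(1-p)/(N*p) := ⟨_, rfl⟩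
  rw [← hadef]
  obtain ⟨c, hcdef⟩ : ∃ c : ℝ, c = (K:ℝ)/(m:ℝ) := ⟨_, rfl⟩
  rw [← hcdef]
  obtain ⟨u, hudef⟩ : ∃ u : ℝ, u = (K:ℝ)*(t+(K:ℝ))/((m:ℝ)*p) := ⟨_, rfl⟩
  rw [← hudef]
  have hNp : 0 < N * p := mul_pos hN hp1
  have hMp : 0 < (m:ℝ) * p := mul_pos hM hp1
  have ha0 : 0 ≤ a := by rw [hadef]; apply div_nonneg _ hNp.le; nlinarith
  have ha1 : a ≤ 1 := by rw [hadef, div_le_one hNp]; exact hA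
  have hc0 : 0 ≤ c := by rw [hcdef]; positivity
  have hcM : c * (m:ℝ) = (K:ℝ) := by rw [hcdef]; field_simp
  have hpbp : p ≤ pb := by
    rw [hpbdef]
    have h1 : (0:ℝ) ≤ (K:ℝ)/N := by positivity
    nlinarith [mul_nonneg h1 (by linarith : (0:ℝ) ≤ 1 - p)]
  have hpb0 : 0 < pb := lt_of_lt_of_le hp1 hpbp
  have hx : pb / p = 1 + a := by
    rw [hpbdef, hadef, hNdef]; field_simp; ring
  have hkm0 : (0:ℝ) ≤ (k:ℝ) := Nat.cast_nonneg k
  have hu0 : 0 ≤ u := by rw [hudef]; apply div_nonneg _ hMp.le; positivity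
  have hden : 0 < (m:ℝ)*p + t + (K:ℝ) := by linarith
  -- Part 1
  have hfac : ∀ j ∈ range K,
      (m:ℝ)*p/((m:ℝ)*p+t+(K:ℝ)) ≤ ((m:ℝ)+1+(j:ℝ)) * pb / ((k:ℝ)+1+(j:ℝ)) := by
    intro j hj
    have hjK : (j:ℝ) ≤ (K:ℝ) - 1 := by
      have h' : (j:ℝ) + 1 ≤ (K:ℝ) := by exact_mod_cast Finset.mem_range.mp hj
      linarith
    have hj0 : (0:ℝ) ≤ (j:ℝ) := Nat.cast_nonneg j
    have hdpos : (0:ℝ) < (k:ℝ)+1+(j:ℝ) := by linarith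
    have hnum : (m:ℝ)*p ≤ ((m:ℝ)+1+(j:ℝ)) * pb :=
      mul_le_mul (by linarith) hpbp hp1.le (by linarith)
    have hnum0 : (0:ℝ) ≤ ((m:ℝ)+1+(j:ℝ)) * pb := mul_nonneg (by linarith) hpb0.le
    exact div_le_div₀ hnum0 hnum hdpos (by linarith)
  have hpart1 : 1 - u ≤ ∏ j ∈ range K, (((m:ℝ)+1+(j:ℝ)) * pb / ((k:ℝ)+1+(j:ℝ))) := by
    have hprod : ((m:ℝ)*p/((m:ℝ)*p+t+(K:ℝ)))^K
        ≤ ∏ j ∈ range K, (((m:ℝ)+1+(j:ℝ)) * pb / ((k:ℝ)+1+(j:ℝ))) := by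
      calc ((m:ℝ)*p/((m:ℝ)*p+t+(K:ℝ)))^K
          = ∏ _j ∈ range K, ((m:ℝ)*p/((m:ℝ)*p+t+(K:ℝ))) := by
            rw [Finset.prod_const, Finset.card_range]
        _ ≤ _ := Finset.prod_le_prod (fun j _ => by positivity) hfac
    have hw : (m:ℝ)*p/((m:ℝ)*p+t+(K:ℝ)) = 1 + (-((t+(K:ℝ))/((m:ℝ)*p+t+(K:ℝ)))) := by
      field_simp; ring
    have hz1 : (t+(K:ℝ))/((m:ℝ)*p+t+(K:ℝ)) ≤ 1 := by
      rw [div_le_one hden]; linarith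
    have hpow := one_add_mul_le_pow (a := -((t+(K:ℝ))/((m:ℝ)*p+t+(K:ℝ)))) (by linarith) K
    have hzu : (K:ℝ) * ((t+(K:ℝ))/((m:ℝ)*p+t+(K:ℝ))) ≤ u := by
      rw [hudef, mul_div_assoc]
      apply mul_le_mul_of_nonneg_left _ hK0
      apply div_le_div₀ (by positivity) le_rfl hMp (by linarith)
    calc 1 - u ≤ 1 + (K:ℝ) * (-((t+(K:ℝ))/((m:ℝ)*p+t+(K:ℝ)))) := by
          rw [mul_neg]; linarith
      _ ≤ (1 + (-((t+(K:ℝ))/((m:ℝ)*p+t+(K:ℝ)))))^K := hpow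
      _ = ((m:ℝ)*p/((m:ℝ)*p+t+(K:ℝ)))^K := by rw [← hw]
      _ ≤ _ := hprod
  -- Part 2
  obtain ⟨V, hVdef⟩ : ∃ V : ℝ,
      V = (K:ℝ)*(1-p)*(K:ℝ)/N + t*(a + c) + ((m:ℝ)*p+t)*a^2 := ⟨_, rfl⟩
  rw [← hVdef]
  have hV0 : 0 ≤ V := by
    rw [hVdef]
    have h1 : 0 ≤ (K:ℝ)*(1-p)*(K:ℝ)/N :=
      div_nonneg (mul_nonneg (mul_nonneg hK0 (by linarith)) hK0) hN.le
    have h2 : 0 ≤ t * (a + c) := mul_nonneg ht (by linarith)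
    have h3 : 0 ≤ ((m:ℝ)*p + t) * a^2 := mul_nonneg (by linarith) (sq_nonneg a)
    linarith
  have hxpos : 0 < pb / p := div_pos hpb0 hp1
  have hy : (0:ℝ) < (m:ℝ) / N := div_pos hM hN
  have hmk : ((m-k:ℕ):ℝ) = (m:ℝ) - (k:ℝ) := Nat.cast_sub hk
  have hlogx : a - a^2 ≤ Real.log (pb/p) := by
    rw [hx]
    have h1a : (0:ℝ) < 1 + a := by linarith
    have h := Real.log_le_sub_one_of_pos (x := (1+a)⁻¹) (by positivity)
    rw [Real.log_inv] at h
    have heq : 1 - (1+a)⁻¹ = a/(1+a) := by field_simp; ring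
    have h2 : a - a^2 ≤ a/(1+a) := by
      rw [le_div_iff₀ h1a]
      have he : (a - a^2)*(1+a) = a - a^3 := by ring
      have h3 : 0 ≤ a^3 := pow_nonneg ha0 3
      linarith
    linarith
  have hlogy : -c ≤ Real.log ((m:ℝ)/N) := by
    have h := Real.log_le_sub_one_of_pos (x := N/(m:ℝ)) (div_pos hN hM)
    have h2 : -Real.log ((m:ℝ)/N) = Real.log (N/(m:ℝ)) := by
      rw [← Real.log_inv, inv_div]
    have hNM : N/(m:ℝ) - 1 = c := by rw [hcdef, hNdef]; field_simp; ring
    linarith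
  have hpart2 : 1 - V ≤ (pb/p)^k * ((m:ℝ)/N)^(m-k) := by
    have hxk : (pb/p)^k = Real.exp ((k:ℝ) * Real.log (pb/p)) := by
      rw [← Real.log_pow, Real.exp_log (pow_pos hxpos k)]
    have hyk : ((m:ℝ)/N)^(m-k) = Real.exp (((m-k:ℕ):ℝ) * Real.log ((m:ℝ)/N)) := by
      rw [← Real.log_pow, Real.exp_log (pow_pos hy (m-k))]
    rw [hxk, hyk, ← Real.exp_add, hmk]
    have hexp := Real.add_one_le_exp
      ((k:ℝ) * Real.log (pb/p) + ((m:ℝ) - (k:ℝ)) * Real.log ((m:ℝ)/N))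
    have s1 : (k:ℝ) * (a - a^2) ≤ (k:ℝ) * Real.log (pb/p) :=
      mul_le_mul_of_nonneg_left hlogx hkm0
    have s2 : ((m-k:ℕ):ℝ) * (-c) ≤ ((m-k:ℕ):ℝ) * Real.log ((m:ℝ)/N) :=
      mul_le_mul_of_nonneg_left hlogy (Nat.cast_nonneg _)
    have hMpa : (m:ℝ)*p*a + (K:ℝ)*(1-p)*(K:ℝ)/N = (K:ℝ)*(1-p) := by
      rw [hadef, hNdef]; field_simp
    have hfin : -V ≤ (k:ℝ) * (a - a^2) + ((m:ℝ) - (k:ℝ)) * (-c) := by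
      rw [hVdef]
      have hA : 0 ≤ ((k:ℝ) - ((m:ℝ)*p - t)) * a := mul_nonneg (by linarith) ha0
      have hB : 0 ≤ (((m:ℝ)*p + t) - (k:ℝ)) * a^2 := mul_nonneg (by linarith) (sq_nonneg a)
      have hC : 0 ≤ c * ((k:ℝ) - ((m:ℝ)*p - t)) := mul_nonneg hc0 (by linarith)
      have hcM2 : c * (m:ℝ) * (1-p) = (K:ℝ) * (1-p) := by rw [hcM]
      linarith [hA, hB, hC, hMpa, hcM2]
    rw [hmk] at s2
    linarith
  -- combine
  have hP1pos : (0:ℝ) ≤ ∏ j ∈ range K, (((m:ℝ)+1+(j:ℝ)) * pb / ((k:ℝ)+1+(j:ℝ))) :=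
    Finset.prod_nonneg (fun j _ => by positivity)
  have hP2pos : (0:ℝ) ≤ (pb/p)^k * ((m:ℝ)/N)^(m-k) :=
    mul_nonneg (pow_nonneg hxpos.le k) (pow_nonneg hy.le _)
  rcases le_or_gt (1 - u - V) 0 with h | h
  · calc 1 - u - V ≤ 0 := h
      _ ≤ _ := mul_nonneg hP1pos hP2pos
  · have hu1 : u < 1 := by linarith
    have hV1 : V < 1 := by linarith
    calc 1 - u - V ≤ (1-u) * (1-V) := by nlinarith [mul_nonneg hu0 hV0]
      _ ≤ _ := mul_le_mul hpart1 hpart2 (by linarith) hP1pos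

lemma term_bound (K m k : ℕ) (p t : ℝ) (hp1 : 0 < p) (hp2 : p < 1)
    (hm : 0 < m) (hk : k ≤ m) (ht : 0 < t)
    (hA : (K:ℝ)*(1-p) ≤ (((m:ℝ)+(K:ℝ))) * p) :
    max (binomialPmf m p k
      - binomialPmf (m+K) ((1 - (K:ℝ)/((m+K:ℕ):ℝ)) * p + (K:ℝ)/((m+K:ℕ):ℝ)) (K + k)) 0
    ≤ ((K:ℝ)*(t+(K:ℝ))/((m:ℝ)*p)
      + ((K:ℝ)*(1-p)*(K:ℝ)/((m:ℝ)+(K:ℝ))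
         + t*((K:ℝ)*(1-p)/(((m:ℝ)+(K:ℝ))*p) + (K:ℝ)/(m:ℝ))
         + ((m:ℝ)*p+t)*((K:ℝ)*(1-p)/(((m:ℝ)+(K:ℝ))*p))^2)) * binomialPmf m p k
      + binomialPmf m p k * ((k:ℝ) - (m:ℝ)*p)^2 / t^2 := by
  have hM : (0:ℝ) < (m:ℝ) := by exact_mod_cast hm
  have hK0 : (0:ℝ) ≤ (K:ℝ) := Nat.cast_nonneg K
  have hq0 : 0 ≤ binomialPmf m p k := binom_nonneg hp1.le hp2.le k
  have hU0 : 0 ≤ (K:ℝ)*(t+(K:ℝ))/((m:ℝ)*p) :=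
    div_nonneg (mul_nonneg hK0 (by linarith)) (by positivity)
  have hW0 : 0 ≤ (K:ℝ)*(1-p)*(K:ℝ)/((m:ℝ)+(K:ℝ))
         + t*((K:ℝ)*(1-p)/(((m:ℝ)+(K:ℝ))*p) + (K:ℝ)/(m:ℝ))
         + ((m:ℝ)*p+t)*((K:ℝ)*(1-p)/(((m:ℝ)+(K:ℝ))*p))^2 := by
    have h1 : 0 ≤ (K:ℝ)*(1-p)*(K:ℝ)/((m:ℝ)+(K:ℝ)) :=
      div_nonneg (mul_nonneg (mul_nonneg hK0 (by linarith)) hK0) (by positivity)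
    have h2 : 0 ≤ t*((K:ℝ)*(1-p)/(((m:ℝ)+(K:ℝ))*p) + (K:ℝ)/(m:ℝ)) := by
      apply mul_nonneg ht.le
      have := div_nonneg (mul_nonneg hK0 (by linarith : (0:ℝ) ≤ 1-p))
        (by positivity : (0:ℝ) ≤ ((m:ℝ)+(K:ℝ))*p)
      have := div_nonneg hK0 hM.le
      linarith
    have h3 : 0 ≤ ((m:ℝ)*p+t)*((K:ℝ)*(1-p)/((((m:ℝ)+(K:ℝ)))*p))^2 :=
      mul_nonneg (by positivity) (sq_nonneg _)
    linarith
  have hsq0 : 0 ≤ binomialPmf m p k * ((k:ℝ) - (m:ℝ)*p)^2 / t^2 := by positivity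
  have hRHS0 : 0 ≤ ((K:ℝ)*(t+(K:ℝ))/((m:ℝ)*p)
      + ((K:ℝ)*(1-p)*(K:ℝ)/((m:ℝ)+(K:ℝ))
         + t*((K:ℝ)*(1-p)/(((m:ℝ)+(K:ℝ))*p) + (K:ℝ)/(m:ℝ))
         + ((m:ℝ)*p+t)*((K:ℝ)*(1-p)/(((m:ℝ)+(K:ℝ))*p))^2)) * binomialPmf m p k
      + binomialPmf m p k * ((k:ℝ) - (m:ℝ)*p)^2 / t^2 := by
    have := mul_nonneg (by linarith : 0 ≤ (K:ℝ)*(t+(K:ℝ))/((m:ℝ)*p)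
      + ((K:ℝ)*(1-p)*(K:ℝ)/((m:ℝ)+(K:ℝ))
         + t*((K:ℝ)*(1-p)/(((m:ℝ)+(K:ℝ))*p) + (K:ℝ)/(m:ℝ))
         + ((m:ℝ)*p+t)*((K:ℝ)*(1-p)/(((m:ℝ)+(K:ℝ))*p))^2)) hq0
    linarith
  apply max_le _ hRHS0
  by_cases hcen : ((m:ℝ)*p - t ≤ (k:ℝ) ∧ (k:ℝ) ≤ (m:ℝ)*p + t)
  · have hrho := rho_bound K m k p t hp1 hp2 hm hk ht.le hcen.1 hcen.2 hA
    have hdec := pmf_decomp K m k p hp1 hp2 hk hm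
    have hmul := mul_le_mul_of_nonneg_left hrho hq0
    rw [← hdec] at hmul
    nlinarith [hsq0, hmul]
  · -- tail case
    have hpb0 : 0 ≤ (1 - (K:ℝ)/((m+K:ℕ):ℝ)) * p + (K:ℝ)/((m+K:ℕ):ℝ) := by
      have hN : (0:ℝ) < ((m+K:ℕ):ℝ) := by
        have : (0:ℝ) < (m:ℝ) + (K:ℝ) := by linarith
        push_cast; linarith
      have hKN : (K:ℝ)/((m+K:ℕ):ℝ) ≤ 1 := by
        rw [div_le_one hN]; push_cast; linarith
      have hKN0 : 0 ≤ (K:ℝ)/((m+K:ℕ):ℝ) := div_nonneg hK0 hN.le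
      nlinarith
    have hpb1 : (1 - (K:ℝ)/((m+K:ℕ):ℝ)) * p + (K:ℝ)/((m+K:ℕ):ℝ) ≤ 1 := by
      have hN : (0:ℝ) < ((m+K:ℕ):ℝ) := by
        have : (0:ℝ) < (m:ℝ) + (K:ℝ) := by linarith
        push_cast; linarith
      have hKN : (K:ℝ)/((m+K:ℕ):ℝ) ≤ 1 := by
        rw [div_le_one hN]; push_cast; linarith
      have hKN0 : 0 ≤ (K:ℝ)/((m+K:ℕ):ℝ) := div_nonneg hK0 hN.le
      nlinarith
    have hr0 : 0 ≤ binomialPmf (m+K)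
        ((1 - (K:ℝ)/((m+K:ℕ):ℝ)) * p + (K:ℝ)/((m+K:ℕ):ℝ)) (K + k) :=
      binom_nonneg hpb0 hpb1 _
    have hsq : t^2 ≤ ((k:ℝ) - (m:ℝ)*p)^2 := by
      rcases not_and_or.mp hcen with h | h
      · push_neg at h; nlinarith
      · push_neg at h; nlinarith
    have hq_le : binomialPmf m p k ≤ binomialPmf m p k * ((k:ℝ) - (m:ℝ)*p)^2 / t^2 := by
      rw [le_div_iff₀ (by positivity)]
      nlinarith [mul_le_mul_of_nonneg_left hsq hq0]
    have hUW : 0 ≤ ((K:ℝ)*(t+(K:ℝ))/((m:ℝ)*p)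
      + ((K:ℝ)*(1-p)*(K:ℝ)/((m:ℝ)+(K:ℝ))
         + t*((K:ℝ)*(1-p)/(((m:ℝ)+(K:ℝ))*p) + (K:ℝ)/(m:ℝ))
         + ((m:ℝ)*p+t)*((K:ℝ)*(1-p)/(((m:ℝ)+(K:ℝ))*p))^2)) * binomialPmf m p k :=
      mul_nonneg (by linarith) hq0
    linarith

lemma binom_zero {m k : ℕ} (h : m < k) (p : ℝ) : binomialPmf m p k = 0 := by
  unfold binomialPmf; rw [Nat.choose_eq_zero_of_lt h]; simp

/-- Fix `K ≥ 0`. Let `p n ∈ (0,1)` with `n * p n → ∞` and `p n → 0`, and for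
`n > K` set `p̄ n = (1 - K/n) * p n + K/n`. Then the total variation distance
`(1/2) ∑_x |Pr(K + B n = x) - Pr(Binomial (n, p̄ n) = x)|`, where `B n ~ Binomial (n - K, p n)`,
tends to `0` as `n → ∞`. -/
theorem dTV_shifted_binomial_tendsto_zero
    (K : ℕ) (p : ℕ → ℝ) (hp : ∀ n, p n ∈ Set.Ioo (0 : ℝ) 1)
    (hnp : Tendsto (fun n : ℕ => (n : ℝ) * p n) atTop atTop)
    (hp0 : Tendsto p atTop (𝓝 0)) :
    Tendsto (fun n : ℕ => (1 / 2 : ℝ) * ∑' x : ℕ,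
        |(if K ≤ x then binomialPmf (n - K) (p n) (x - K) else 0) -
          binomialPmf n ((1 - (K : ℝ) / (n : ℝ)) * p n + (K : ℝ) / (n : ℝ)) x|)
      atTop (𝓝 0) := by
  have hK0 : (0:ℝ) ≤ (K:ℝ) := Nat.cast_nonneg K
  apply squeeze_zero'
    (g := fun n : ℕ => 20*((K:ℝ)+1)^2 * ((n:ℝ) * p n) ^ (-(1/4) : ℝ))
  · exact Filter.Eventually.of_forall fun n =>
      mul_nonneg (by norm_num) (tsum_nonneg fun x => abs_nonneg _)
  · filter_upwards [hnp.eventually_ge_atTop ((4*((K:ℝ)+1))^4)] with n hs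
    obtain ⟨hp1, hp2⟩ := hp n
    set P := p n with hPdef
    set s : ℝ := (n:ℝ) * P with hsdef
    -- basic size facts
    have hK4 : 4*((K:ℝ)+1) ≤ s := le_trans (le_self_pow₀ (by nlinarith) (by norm_num)) hs
    have hs1 : (1:ℝ) ≤ s := by nlinarith
    have hs0 : (0:ℝ) < s := by linarith
    have hn0 : 0 < n := by
      rcases Nat.eq_zero_or_pos n with h | h
      · exfalso; rw [hsdef, h] at hs1; norm_num at hs1
      · exact h
    have hnR : (0:ℝ) < (n:ℝ) := by exact_mod_cast hn0
    have hsn : s ≤ (n:ℝ) := by rw [hsdef]; nlinarith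
    have hKn : K < n := by
      have : (K:ℝ) < (n:ℝ) := by linarith
      exact_mod_cast this
    set m := n - K with hmdef
    have hmn : m + K = n := by omega
    have hm : 0 < m := by omega
    have hmR : (m:ℝ) = (n:ℝ) - (K:ℝ) := by
      rw [hmdef]; exact_mod_cast Nat.cast_sub hKn.le
    have hmKR : (m:ℝ) + (K:ℝ) = (n:ℝ) := by rw [hmR]; ring
    have hM : (0:ℝ) < (m:ℝ) := by
      have : (0:ℝ) < ((m:ℕ):ℝ) := by exact_mod_cast hm
      exact this
    -- pbar facts
    set pb : ℝ := (1 - (K:ℝ)/(n:ℝ)) * P + (K:ℝ)/(n:ℝ) with hpbdef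
    have hKn0 : 0 ≤ (K:ℝ)/(n:ℝ) := div_nonneg hK0 hnR.le
    have hKn1 : (K:ℝ)/(n:ℝ) < 1 := by
      rw [div_lt_one hnR]; linarith
    have hpb0 : 0 ≤ pb := by rw [hpbdef]; nlinarith
    have hpb1 : pb ≤ 1 := by rw [hpbdef]; nlinarith
    -- tsum to finite sum
    have hzero : ∀ x ∉ range (n+1),
        |(if K ≤ x then binomialPmf m P (x - K) else 0) - binomialPmf n pb x| = 0 := by
      intro x hx
      have hx' : n < x := by simpa using hx
      have hr : binomialPmf n pb x = 0 := binom_zero hx' pb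
      have hq : (if K ≤ x then binomialPmf m P (x - K) else 0) = 0 := by
        by_cases h : K ≤ x
        · rw [if_pos h]; exact binom_zero (by omega) P
        · rw [if_neg h]
      rw [hq, hr]; simp
    rw [show (fun x : ℕ => |(if K ≤ x then binomialPmf (n - K) (p n) (x - K) else 0) -
          binomialPmf n ((1 - (K : ℝ) / (n : ℝ)) * p n + (K : ℝ) / (n : ℝ)) x|)
        = (fun x : ℕ => |(if K ≤ x then binomialPmf m P (x - K) else 0) -
          binomialPmf n pb x|) from rfl]
    rw [tsum_eq_sum hzero]
    -- sums equal one
    have hsplit : n + 1 = K + (m+1) := by omega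
    have hQ : ∑ x ∈ range (n+1), (if K ≤ x then binomialPmf m P (x - K) else 0) = 1 := by
      rw [hsplit, Finset.sum_range_add]
      have h1 : ∑ x ∈ range K, (if K ≤ x then binomialPmf m P (x - K) else 0) = 0 := by
        apply Finset.sum_eq_zero
        intro x hx
        rw [if_neg (by simpa using Finset.mem_range.mp hx)]
      have h2 : ∑ j ∈ range (m+1), (if K ≤ K + j then binomialPmf m P (K + j - K) else 0)
          = ∑ j ∈ range (m+1), binomialPmf m P j := by
        apply Finset.sum_congr rfl
        intro j _
        rw [if_pos (Nat.le_add_right K j)]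
        congr 1
        omega
      rw [h1, h2, binom_sum_one]; ring
    have hR : ∑ x ∈ range (n+1), binomialPmf n pb x = 1 := binom_sum_one n pb
    -- abs to max
    have habs : ∀ x ∈ range (n+1),
        |(if K ≤ x then binomialPmf m P (x - K) else 0) - binomialPmf n pb x|
        = 2 * max ((if K ≤ x then binomialPmf m P (x - K) else 0) - binomialPmf n pb x) 0
          - ((if K ≤ x then binomialPmf m P (x - K) else 0) - binomialPmf n pb x) := by
      intro x _
      rcases le_total ((if K ≤ x then binomialPmf m P (x - K) else 0) - binomialPmf n pb x) 0
        with h | h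
      · rw [abs_of_nonpos h, max_eq_right h]; ring
      · rw [abs_of_nonneg h, max_eq_left h]; ring
    rw [Finset.sum_congr rfl habs, Finset.sum_sub_distrib, Finset.sum_sub_distrib, hQ, hR,
      ← Finset.mul_sum]
    -- reduce to sum over shifted index
    have hmax0 : ∑ x ∈ range K,
        max ((if K ≤ x then binomialPmf m P (x - K) else 0) - binomialPmf n pb x) 0 = 0 := by
      apply Finset.sum_eq_zero
      intro x hx
      rw [if_neg (by simpa using Finset.mem_range.mp hx)]
      have := binom_nonneg hpb0 hpb1 (m := n) (p := pb) x
      rw [max_eq_right (by linarith)]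
    have hshift : ∑ x ∈ range (n+1),
        max ((if K ≤ x then binomialPmf m P (x - K) else 0) - binomialPmf n pb x) 0
        = ∑ j ∈ range (m+1), max (binomialPmf m P j - binomialPmf n pb (K + j)) 0 := by
      rw [hsplit, Finset.sum_range_add, hmax0, zero_add]
      apply Finset.sum_congr rfl
      intro j _
      rw [if_pos (Nat.le_add_right K j), show K + j - K = j from by omega]
    rw [hshift]
    -- apply per-term bound
    set t : ℝ := s ^ ((3:ℝ)/4) with htdef
    set x : ℝ := s ^ (-(1/4) : ℝ) with hxdef
    have ht0 : 0 < t := Real.rpow_pos_of_pos hs0 _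
    have hx0 : 0 < x := Real.rpow_pos_of_pos hs0 _
    have hA : (K:ℝ)*(1-P) ≤ ((m:ℝ)+(K:ℝ)) * P := by
      rw [hmKR]; nlinarith
    have hterm : ∀ j ∈ range (m+1),
        max (binomialPmf m P j - binomialPmf n pb (K + j)) 0
        ≤ ((K:ℝ)*(t+(K:ℝ))/((m:ℝ)*P)
          + ((K:ℝ)*(1-P)*(K:ℝ)/((m:ℝ)+(K:ℝ))
             + t*((K:ℝ)*(1-P)/(((m:ℝ)+(K:ℝ))*P) + (K:ℝ)/(m:ℝ))
             + ((m:ℝ)*P+t)*((K:ℝ)*(1-P)/(((m:ℝ)+(K:ℝ))*P))^2)) * binomialPmf m P j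
          + binomialPmf m P j * ((j:ℝ) - (m:ℝ)*P)^2 / t^2 := by
      intro j hj
      have hjm : j ≤ m := by
        have := Finset.mem_range.mp hj; omega
      have h := term_bound K m j P t hp1 hp2 hm hjm ht0 hA
      rw [hmn] at h
      have hpb_eq : (1 - (K:ℝ)/((n:ℕ):ℝ)) * P + (K:ℝ)/((n:ℕ):ℝ) = pb := by rw [hpbdef]
      rw [hpb_eq] at h
      exact h
    have hsum_le := Finset.sum_le_sum hterm
    -- evaluate the bounding sum
    have hsum_eval : ∑ j ∈ range (m+1),
        (((K:ℝ)*(t+(K:ℝ))/((m:ℝ)*P)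
          + ((K:ℝ)*(1-P)*(K:ℝ)/((m:ℝ)+(K:ℝ))
             + t*((K:ℝ)*(1-P)/(((m:ℝ)+(K:ℝ))*P) + (K:ℝ)/(m:ℝ))
             + ((m:ℝ)*P+t)*((K:ℝ)*(1-P)/(((m:ℝ)+(K:ℝ))*P))^2)) * binomialPmf m P j
          + binomialPmf m P j * ((j:ℝ) - (m:ℝ)*P)^2 / t^2)
        = ((K:ℝ)*(t+(K:ℝ))/((m:ℝ)*P)
          + ((K:ℝ)*(1-P)*(K:ℝ)/((m:ℝ)+(K:ℝ))
             + t*((K:ℝ)*(1-P)/(((m:ℝ)+(K:ℝ))*P) + (K:ℝ)/(m:ℝ))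
             + ((m:ℝ)*P+t)*((K:ℝ)*(1-P)/(((m:ℝ)+(K:ℝ))*P))^2))
          + (m:ℝ)*P*(1-P)/t^2 := by
      rw [Finset.sum_add_distrib, ← Finset.mul_sum, binom_sum_one, mul_one]
      congr 1
      have : ∀ j ∈ range (m+1), binomialPmf m P j * ((j:ℝ) - (m:ℝ)*P)^2 / t^2
          = (((j:ℝ) - (m:ℝ)*P)^2 * binomialPmf m P j) / t^2 := by
        intro j _; ring
      rw [Finset.sum_congr rfl this, ← Finset.sum_div, binom_var]
    -- numeric bound
    have hnum : ((K:ℝ)*(t+(K:ℝ))/((m:ℝ)*P)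
          + ((K:ℝ)*(1-P)*(K:ℝ)/((m:ℝ)+(K:ℝ))
             + t*((K:ℝ)*(1-P)/(((m:ℝ)+(K:ℝ))*P) + (K:ℝ)/(m:ℝ))
             + ((m:ℝ)*P+t)*((K:ℝ)*(1-P)/(((m:ℝ)+(K:ℝ))*P))^2))
          + (m:ℝ)*P*(1-P)/t^2 ≤ 20*((K:ℝ)+1)^2 * x := by
      rw [hmKR, ← hsdef]
      have hK_le : (K:ℝ) ≤ s/4 - 1 := by linarith
      have hmpP : (m:ℝ)*P = s - (K:ℝ)*P := by rw [hmR, hsdef]; ring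
      have hKP0 : 0 ≤ (K:ℝ)*P := mul_nonneg hK0 hp1.le
      have hKP_le : (K:ℝ)*P ≤ (K:ℝ) := by
        linarith only [mul_nonneg hK0 (by linarith : (0:ℝ) ≤ 1 - P)]
      have hmp_lb : s/2 ≤ (m:ℝ)*P := by rw [hmpP]; linarith only [hKP_le, hK_le, hs0]
      have hmp_ub : (m:ℝ)*P ≤ s := by rw [hmpP]; linarith
      have hmp_pos : 0 < (m:ℝ)*P := mul_pos hM hp1
      have hm_lb : s/2 ≤ (m:ℝ) := by rw [hmR]; linarith only [hsn, hK_le, hs0]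
      have E1 : s * x = t := by
        rw [hxdef, htdef]
        nth_rewrite 1 [← Real.rpow_one s]
        rw [← Real.rpow_add hs0]
        norm_num
      have h1t : (1:ℝ) ≤ t := Real.one_le_rpow hs1 (by norm_num)
      have hx_le1 : x ≤ 1 := by
        rw [hxdef]
        exact Real.rpow_le_one_of_one_le_of_nonpos hs1 (by norm_num)
      have hts : t ≤ s := by
        linarith only [E1, mul_nonneg hs0.le (by linarith only [hx_le1] : (0:ℝ) ≤ 1 - x)]
      have E5 : s ≤ x * t^2 := by
        have e : x * t^2 = s ^ ((5:ℝ)/4) := by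
          rw [hxdef, htdef, ← Real.rpow_natCast (s ^ ((3:ℝ)/4)) 2,
            ← Real.rpow_mul hs0.le, ← Real.rpow_add hs0]
          norm_num
        calc s = s ^ (1:ℝ) := (Real.rpow_one s).symm
          _ ≤ s ^ ((5:ℝ)/4) := Real.rpow_le_rpow_of_exponent_le hs1 (by norm_num)
          _ = x * t^2 := e.symm
      have e1 : (K:ℝ)*(s*x) = (K:ℝ)*t := by rw [E1]
      have e2 : (K:ℝ)^2*(s*x) = (K:ℝ)^2*t := by rw [E1]
      have d3 : 0 ≤ (K:ℝ)^2*(t-1) := mul_nonneg (sq_nonneg _) (by linarith)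
      have B1 : (K:ℝ)*(t+(K:ℝ))/((m:ℝ)*P) ≤ (2*(K:ℝ) + 2*(K:ℝ)^2) * x := by
        rw [div_le_iff₀ hmp_pos]
        have d1 : 0 ≤ (K:ℝ)*x*((m:ℝ)*P - s/2) :=
          mul_nonneg (mul_nonneg hK0 hx0.le) (by linarith)
        have d2 : 0 ≤ (K:ℝ)^2*x*((m:ℝ)*P - s/2) :=
          mul_nonneg (mul_nonneg (sq_nonneg _) hx0.le) (by linarith)
        linarith only [e1, e2, d1, d2, d3]
      have B2 : (K:ℝ)*(1-P)*(K:ℝ)/((n:ℕ):ℝ) ≤ (K:ℝ)^2 * x := by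
        rw [div_le_iff₀ hnR]
        have f1 : 0 ≤ (K:ℝ)^2*x*((n:ℝ) - s) :=
          mul_nonneg (mul_nonneg (sq_nonneg _) hx0.le) (by linarith)
        have f4 : 0 ≤ (K:ℝ)^2*P := mul_nonneg (sq_nonneg _) hp1.le
        linarith only [e2, f1, f4, d3]
      have sub1 : (K:ℝ)*(1-P)/s ≤ (K:ℝ)/s := by
        apply div_le_div₀ hK0 (by linarith only [mul_nonneg hK0 hp1.le]) hs0 le_rfl
      have sub0 : 0 ≤ (K:ℝ)*(1-P)/s :=
        div_nonneg (mul_nonneg hK0 (by linarith)) hs0.le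
      have Ets : t/s = x := by rw [← E1]; exact mul_div_cancel_left₀ x hs0.ne'
      have B3 : t*((K:ℝ)*(1-P)/s + (K:ℝ)/(m:ℝ)) ≤ 3*(K:ℝ)*x := by
        have sub2 : (K:ℝ)/(m:ℝ) ≤ 2*(K:ℝ)/s := by
          rw [div_le_div_iff₀ hM hs0]
          linarith only [mul_nonneg hK0 (by linarith only [hm_lb] : 0 ≤ 2*(m:ℝ) - s)]
        calc t*((K:ℝ)*(1-P)/s + (K:ℝ)/(m:ℝ)) ≤ t*(3*(K:ℝ)/s) := by
              apply mul_le_mul_of_nonneg_left _ ht0.le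
              have : (K:ℝ)/s + 2*(K:ℝ)/s = 3*(K:ℝ)/s := by ring
              linarith
          _ = 3*(K:ℝ)*(t/s) := by ring
          _ = 3*(K:ℝ)*x := by rw [Ets]
      have B4 : ((m:ℝ)*P+t)*((K:ℝ)*(1-P)/s)^2 ≤ 2*(K:ℝ)^2*x := by
        have hsq : ((K:ℝ)*(1-P)/s)^2 ≤ ((K:ℝ)/s)^2 := pow_le_pow_left₀ sub0 sub1 2
        have hmpt : (m:ℝ)*P + t ≤ 2*s := by linarith
        have step : ((m:ℝ)*P+t)*((K:ℝ)*(1-P)/s)^2 ≤ 2*s*((K:ℝ)/s)^2 := by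
          apply mul_le_mul hmpt hsq (sq_nonneg _) (by linarith)
        have eq1 : 2*s*((K:ℝ)/s)^2 = 2*(K:ℝ)^2/s := by
          field_simp
        have last : 2*(K:ℝ)^2/s ≤ 2*(K:ℝ)^2*x := by
          rw [div_le_iff₀ hs0]
          linarith only [e2, d3]
        linarith
      have B5 : (m:ℝ)*P*(1-P)/t^2 ≤ x := by
        rw [div_le_iff₀ (pow_pos ht0 2)]
        linarith only [E5, hmp_ub, mul_nonneg (mul_nonneg hM.le hp1.le) hp1.le]
      have final : (2*(K:ℝ) + 2*(K:ℝ)^2)*x + (K:ℝ)^2*x + 3*(K:ℝ)*x + 2*(K:ℝ)^2*x + x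
          ≤ 20*((K:ℝ)+1)^2 * x := by
        linarith only [mul_nonneg hx0.le hK0, mul_nonneg (mul_nonneg hx0.le hK0) hK0, hx0.le]
      linarith
    calc (1/2) * (2 * ∑ j ∈ range (m+1), max (binomialPmf m P j - binomialPmf n pb (K+j)) 0
            - (1 - 1))
        = ∑ j ∈ range (m+1), max (binomialPmf m P j - binomialPmf n pb (K+j)) 0 := by ring
      _ ≤ _ := le_trans (le_trans hsum_le (le_of_eq hsum_eval)) hnum
  · have h1 : Tendsto (fun y:ℝ => y ^ (-(1/4:ℝ))) atTop (𝓝 0) :=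
      tendsto_rpow_neg_atTop (by norm_num)
    simpa using (h1.comp hnp).const_mul (20*((K:ℝ)+1)^2)
end

section
/- Let λ > 0 be a real, K ≥ 1 an integer, and N a Poisson(λ) random variable. Let x* be the least natural number x such that λ^K ≤ (x+1)(x+2)⋯(x+K). Then the total variation distance between the law of N + K and the law of N equals Pr(x* ≤ N ≤ x* + K − 1) = Pr(N ≥ x*) − Pr(N ≥ x* + K). -/
open Filter

/-- The probability mass function of the `Poisson (lam)` distribution:
`x ↦ exp (-lam) * lam^x / x!`. -/
noncomputable def poissonPmfR (lam : ℝ) (x : ℕ) : ℝ :=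
  Real.exp (-lam) * lam ^ x / (x.factorial : ℝ)

lemma fact_add_eq (y K : ℕ) :
    ((y + K).factorial : ℝ) = (y.factorial : ℝ) * ∏ i ∈ Finset.Icc 1 K, ((y : ℝ) + (i : ℝ)) := by
  induction K with
  | zero => simp
  | succ k ih =>
      rw [Finset.prod_Icc_succ_top (Nat.le_add_left 1 k), ← mul_assoc, ← ih,
        ← Nat.add_assoc, Nat.factorial_succ]
      push_cast; ring

lemma summable_poisson (lam : ℝ) : Summable (poissonPmfR lam) := by
  refine ((Real.summable_pow_div_factorial lam).mul_left (Real.exp (-lam))).congr fun x => ?_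
  rw [poissonPmfR, mul_div_assoc]

lemma summable_tail {f : ℕ → ℝ} (hf : Summable f) (n : ℕ) :
    Summable (fun x => if n ≤ x then f x else 0) := by
  rw [← summable_nat_add_iff n]
  simpa [Nat.le_add_left] using (summable_nat_add_iff (f := f) n).2 hf

lemma tsum_tail {f : ℕ → ℝ} (hf : Summable f) (n : ℕ) :
    ∑' x : ℕ, (if n ≤ x then f x else 0) = ∑' i : ℕ, f (i + n) := by
  rw [← Summable.sum_add_tsum_nat_add n (summable_tail hf n),
    Finset.sum_eq_zero (fun i hi => if_neg (Nat.not_le.mpr (Finset.mem_range.mp hi))), zero_add]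
  exact tsum_congr fun i => if_pos (Nat.le_add_left n i)

lemma pdiff (lam : ℝ) (hlam : 0 < lam) (y K : ℕ) :
    poissonPmfR lam (y + K) ≤ poissonPmfR lam y ↔
      lam ^ K ≤ ∏ i ∈ Finset.Icc 1 K, ((y : ℝ) + (i : ℝ)) := by
  have hc : (0 : ℝ) < Real.exp (-lam) * lam ^ y * (y.factorial : ℝ) := by positivity
  unfold poissonPmfR
  rw [div_le_div_iff₀ (by positivity) (by positivity), fact_add_eq, pow_add]
  rw [show Real.exp (-lam) * (lam ^ y * lam ^ K) * (y.factorial : ℝ)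
      = (Real.exp (-lam) * lam ^ y * (y.factorial : ℝ)) * lam ^ K from by ring,
    show Real.exp (-lam) * lam ^ y * ((y.factorial : ℝ) * ∏ i ∈ Finset.Icc 1 K, ((y : ℝ) + (i : ℝ)))
      = (Real.exp (-lam) * lam ^ y * (y.factorial : ℝ)) * ∏ i ∈ Finset.Icc 1 K, ((y : ℝ) + (i : ℝ))
      from by ring]
  exact mul_le_mul_iff_right₀ hc

/-- Let `lam > 0`, `K ≥ 1`, and `N ~ Poisson (lam)`. Let `x*` be the least
natural number `x` with `lam^K ≤ (x+1)(x+2)⋯(x+K)`. Then the total variation distance between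
the law of `N + K` and the law of `N` equals `Pr (x* ≤ N ≤ x* + K - 1)`, which in turn equals
`Pr (N ≥ x*) - Pr (N ≥ x* + K)`. -/
theorem dTV_poisson_shift_eq_window
    (lam : ℝ) (hlam : 0 < lam) (K : ℕ) (hK : 1 ≤ K) :
    ((1 / 2 : ℝ) * ∑' x : ℕ,
        |(if K ≤ x then poissonPmfR lam (x - K) else 0) - poissonPmfR lam x| =
      ∑ x ∈ Finset.Ico (sInf {x : ℕ | lam ^ K ≤ ∏ i ∈ Finset.Icc 1 K, ((x : ℝ) + (i : ℝ))})
          (sInf {x : ℕ | lam ^ K ≤ ∏ i ∈ Finset.Icc 1 K, ((x : ℝ) + (i : ℝ))} + K),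
        poissonPmfR lam x) ∧
    ((∑ x ∈ Finset.Ico (sInf {x : ℕ | lam ^ K ≤ ∏ i ∈ Finset.Icc 1 K, ((x : ℝ) + (i : ℝ))})
          (sInf {x : ℕ | lam ^ K ≤ ∏ i ∈ Finset.Icc 1 K, ((x : ℝ) + (i : ℝ))} + K),
        poissonPmfR lam x) =
      (∑' x : ℕ, if sInf {x : ℕ | lam ^ K ≤ ∏ i ∈ Finset.Icc 1 K, ((x : ℝ) + (i : ℝ))} ≤ x then
          poissonPmfR lam x else 0) -
      ∑' x : ℕ, if sInf {x : ℕ | lam ^ K ≤ ∏ i ∈ Finset.Icc 1 K, ((x : ℝ) + (i : ℝ))} + K ≤ x then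
          poissonPmfR lam x else 0) := by
  classical
  set p : ℕ → ℝ := poissonPmfR lam with hp
  set S : Set ℕ := {x : ℕ | lam ^ K ≤ ∏ i ∈ Finset.Icc 1 K, ((x : ℝ) + (i : ℝ))} with hS
  set s : ℕ := sInf S with hs
  have hppos : ∀ x, 0 < p x := fun x => by
    rw [hp]; unfold poissonPmfR; positivity
  have hmono : ∀ x y : ℕ, x ≤ y →
      (∏ i ∈ Finset.Icc 1 K, ((x : ℝ) + (i : ℝ))) ≤ ∏ i ∈ Finset.Icc 1 K, ((y : ℝ) + (i : ℝ)) := by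
    intro x y hxy
    refine Finset.prod_le_prod (fun i _ => by positivity) (fun i _ => ?_)
    have : (x : ℝ) ≤ y := Nat.cast_le.2 hxy
    linarith
  have hSne : S.Nonempty := by
    refine ⟨⌈lam⌉₊, ?_⟩
    show lam ^ K ≤ _
    calc lam ^ K = ∏ _i ∈ Finset.Icc 1 K, lam := by
          rw [Finset.prod_const, Nat.card_Icc]; simp
    _ ≤ ∏ i ∈ Finset.Icc 1 K, ((⌈lam⌉₊ : ℝ) + (i : ℝ)) := by
          refine Finset.prod_le_prod (fun _ _ => hlam.le) (fun i _ => ?_)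
          have h1 := Nat.le_ceil lam
          have h2 : (0 : ℝ) ≤ (i : ℝ) := by positivity
          linarith
  have hsle : ∀ x : ℕ, s ≤ x ↔ lam ^ K ≤ ∏ i ∈ Finset.Icc 1 K, ((x : ℝ) + (i : ℝ)) := by
    intro x
    constructor
    · intro h
      have hsS : s ∈ S := Nat.sInf_mem hSne
      exact le_trans hsS (hmono s x h)
    · intro h
      exact Nat.sInf_le h
  have hsumP : Summable p := summable_poisson lam
  have hsumF : Summable (fun x => if K ≤ x then p (x - K) else 0) := by
    rw [← summable_nat_add_iff K]
    simpa [Nat.le_add_left, Nat.add_sub_cancel] using hsumP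
  have htsumF : ∑' x : ℕ, (if K ≤ x then p (x - K) else 0) = ∑' x : ℕ, p x := by
    rw [← Summable.sum_add_tsum_nat_add K hsumF,
      Finset.sum_eq_zero (fun i hi => if_neg (Nat.not_le.mpr (Finset.mem_range.mp hi))), zero_add]
    exact tsum_congr fun i => by simp [Nat.le_add_left, Nat.add_sub_cancel]
  -- second conjunct
  have key2 : (∑ x ∈ Finset.Ico s (s + K), p x) =
      (∑' x : ℕ, if s ≤ x then p x else 0) - ∑' x : ℕ, if s + K ≤ x then p x else 0 := by
    rw [tsum_tail hsumP s, tsum_tail hsumP (s + K)]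
    have hshift : Summable (fun i => p (i + s)) := (summable_nat_add_iff s).2 hsumP
    have split := Summable.sum_add_tsum_nat_add (f := fun i => p (i + s)) K hshift
    have h3 : ∑' i : ℕ, p (i + K + s) = ∑' i : ℕ, p (i + (s + K)) :=
      tsum_congr fun i => by rw [show i + K + s = i + (s + K) from by omega]
    have h4 : ∑ x ∈ Finset.Ico s (s + K), p x = ∑ i ∈ Finset.range K, p (i + s) := by
      rw [Finset.sum_Ico_eq_sum_range]
      simp only [Nat.add_sub_cancel_left]
      exact Finset.sum_congr rfl fun i _ => by rw [Nat.add_comm]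
    rw [h4, ← h3]
    linarith [split]
  -- pointwise abs identity
  have habs : ∀ x : ℕ, |(if K ≤ x then p (x - K) else 0) - p x| =
      (p x - (if K ≤ x then p (x - K) else 0)) +
        2 * (if s + K ≤ x then (if K ≤ x then p (x - K) else 0) - p x else 0) := by
    intro x
    by_cases hx : s + K ≤ x
    · have hKx : K ≤ x := le_trans (Nat.le_add_left K s) hx
      simp only [if_pos hx, if_pos hKx]
      have hy : s ≤ x - K := by omega
      have hle : p x ≤ p (x - K) := by
        have h := (pdiff lam hlam (x - K) K).2 ((hsle (x - K)).1 hy)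
        rwa [show x - K + K = x from by omega] at h
      rw [abs_of_nonneg (by linarith)]; ring
    · simp only [if_neg hx]
      by_cases hKx : K ≤ x
      · simp only [if_pos hKx]
        have hy : ¬ s ≤ x - K := by omega
        have hlt : p (x - K) < p x := by
          have h6 : ¬ p (x - K + K) ≤ p (x - K) :=
            fun hc => hy ((hsle _).2 ((pdiff lam hlam (x - K) K).1 hc))
          have h7 := lt_of_not_ge h6
          rwa [show x - K + K = x from by omega] at h7
        rw [abs_of_nonpos (by linarith)]; ring
      · simp only [if_neg hKx]
        rw [zero_sub, abs_neg, abs_of_pos (hppos x)]; ring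
  -- summable of h
  have heqh : (fun x => if s + K ≤ x then (if K ≤ x then p (x - K) else 0) - p x else 0)
      = fun x => (if s + K ≤ x then (if K ≤ x then p (x - K) else 0) else 0)
          - (if s + K ≤ x then p x else 0) := by
    funext x; by_cases hx : s + K ≤ x <;> simp [hx]
  have hsumh : Summable (fun x => if s + K ≤ x then (if K ≤ x then p (x - K) else 0) - p x else 0) := by
    rw [heqh]
    exact (summable_tail hsumF (s + K)).sub (summable_tail hsumP (s + K))
  have htsumh : (∑' x : ℕ, if s + K ≤ x then (if K ≤ x then p (x - K) else 0) - p x else 0)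
      = (∑' x : ℕ, if s ≤ x then p x else 0) - ∑' x : ℕ, if s + K ≤ x then p x else 0 := by
    rw [heqh, Summable.tsum_sub (summable_tail hsumF (s + K)) (summable_tail hsumP (s + K)),
      tsum_tail hsumF (s + K), tsum_tail hsumP s]
    congr 1
    refine tsum_congr fun i => ?_
    rw [if_pos (by omega : K ≤ i + (s + K)), show i + (s + K) - K = i + s from by omega]
  constructor
  · rw [tsum_congr habs,
      Summable.tsum_add (hsumP.sub hsumF) (hsumh.mul_left 2),
      Summable.tsum_sub hsumP hsumF, htsumF, sub_self, zero_add, tsum_mul_left, htsumh, ← key2]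
    ring
  · exact key2
end

section
/- Let λ > 0 be a real, K ≥ 0 an integer, and N a Poisson(λ) random variable. Then the total variation distance between the law of N + K and the law of N is at most K · sup_{x ∈ ℕ} Pr(N = x). -/
open Filter

/-- Let `lam > 0`, `K ≥ 0`, and `N ~ Poisson (lam)`. The total variation
distance between the law of `N + K` and the law of `N` is at most
`K * sup_{x ∈ ℕ} Pr (N = x)`. -/
theorem dTV_poisson_shift_le_mode_bound
    (lam : ℝ) (hlam : 0 < lam) (K : ℕ) :
    (1 / 2 : ℝ) * ∑' x : ℕ,
        |(if K ≤ x then poissonPmfR lam (x - K) else 0) - poissonPmfR lam x| ≤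
      (K : ℝ) * ⨆ x : ℕ, poissonPmfR lam x := by
  set p := poissonPmfR lam with hpdef
  have hp : ∀ x, 0 ≤ p x := by
    intro x
    exact div_nonneg (mul_nonneg (Real.exp_pos _).le (pow_nonneg hlam.le _)) (by positivity)
  have hsum : Summable p := by
    have h := (Real.summable_pow_div_factorial lam).mul_left (Real.exp (-lam))
    refine h.congr fun x => ?_
    simp [hpdef, poissonPmfR, mul_div_assoc]
  have hsucc : ∀ k : ℕ, p (k + 1) = p k * (lam / (k + 1)) := by
    intro k
    have hk : ((k : ℝ) + 1) ≠ 0 := by positivity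
    have hf : ((k.factorial : ℝ)) ≠ 0 := Nat.cast_ne_zero.2 k.factorial_ne_zero
    simp only [hpdef, poissonPmfR, pow_succ, Nat.factorial_succ]
    push_cast
    field_simp
  set m := ⌊lam⌋₊ with hm
  have hmono : ∀ k : ℕ, (k : ℝ) + 1 ≤ lam → p k ≤ p (k + 1) := by
    intro k hk
    rw [hsucc k]
    refine le_mul_of_one_le_right (hp k) ?_
    rw [le_div_iff₀ (by positivity)]
    linarith
  have hanti : ∀ k : ℕ, lam ≤ (k : ℝ) + 1 → p (k + 1) ≤ p k := by
    intro k hk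
    rw [hsucc k]
    refine mul_le_of_le_one_right (hp k) ?_
    rw [div_le_one (by positivity)]
    linarith
  set u : ℕ → ℝ := fun k => |p k - p (k + 1)| with hu
  have hbase : ∑ k ∈ Finset.range m, u k = p m - p 0 := by
    rw [show (p m - p 0) = ∑ k ∈ Finset.range m, (p (k + 1) - p k) from
      (Finset.sum_range_sub p m).symm]
    refine Finset.sum_congr rfl fun k hk => ?_
    have hkm : k < m := Finset.mem_range.1 hk
    have hkl : (k : ℝ) + 1 ≤ lam := by
      have h1 : (k : ℕ) + 1 ≤ m := hkm
      have h2 : ((k : ℝ) + 1) ≤ (m : ℝ) := by exact_mod_cast h1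
      exact h2.trans (Nat.floor_le hlam.le)
    show |p k - p (k + 1)| = p (k + 1) - p k
    rw [abs_of_nonpos (by linarith [hmono k hkl]), neg_sub]
  have hpart : ∀ n, m ≤ n → ∑ k ∈ Finset.range n, u k = 2 * p m - p 0 - p n := by
    intro n hn
    induction n, hn using Nat.le_induction with
    | base => rw [hbase]; ring
    | succ n hn ih =>
      rw [Finset.sum_range_succ, ih]
      have hml : lam < (n : ℝ) + 1 := by
        have h1 : lam < (m : ℝ) + 1 := Nat.lt_floor_add_one lam
        have h2 : (m : ℝ) ≤ (n : ℝ) := by exact_mod_cast hn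
        linarith
      have hun : u n = p n - p (n + 1) := by
        rw [hu]
        exact abs_of_nonneg (sub_nonneg.2 (hanti n hml.le))
      rw [hun]; ring
  have htend : Tendsto p atTop (nhds 0) := hsum.tendsto_atTop_zero
  have hU : HasSum u (2 * p m - p 0) := by
    rw [hasSum_iff_tendsto_nat_of_nonneg (fun k => abs_nonneg _)]
    have h1 : Tendsto (fun n => 2 * p m - p 0 - p n) atTop (nhds (2 * p m - p 0 - 0)) :=
      tendsto_const_nhds.sub htend
    rw [sub_zero] at h1
    refine h1.congr' ?_
    filter_upwards [eventually_ge_atTop m] with n hn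
    exact (hpart n hn).symm
  set D : ℕ → ℝ := fun y => |(if 1 ≤ y then p (y - 1) else 0) - p y| with hD
  have hDshift : ∀ y, D (y + 1) = u y := by
    intro y
    simp [hD, hu]
  have hD0 : D 0 = p 0 := by
    simp [hD, abs_of_nonneg (hp 0)]
  have hDsum : HasSum D (2 * p m) := by
    have h1 : HasSum (fun y => D (y + 1)) (2 * p m - p 0) := by
      simpa [hDshift] using hU
    have h2 := (hasSum_nat_add_iff (f := D) 1).1 h1
    simpa [hD0] using h2
  have hDsummable : Summable D := hDsum.summable
  -- per-step facts
  set v : ℕ → ℕ → ℝ := fun j x =>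
    |(if j + 1 ≤ x then p (x - (j + 1)) else 0) - (if j ≤ x then p (x - j) else 0)| with hv
  have hveq : ∀ j, v j = fun x => if j ≤ x then D (x - j) else 0 := by
    intro j
    funext x
    by_cases hx : j ≤ x
    · obtain ⟨y, rfl⟩ := Nat.exists_eq_add_of_le hx
      have h1 : (j + 1 ≤ j + y) ↔ (1 ≤ y) := by omega
      have h2 : (j + y) - (j + 1) = y - 1 := by omega
      have h3 : (j + y) - j = y := by omega
      simp only [hv, hD, h1, h2, h3, hx, if_pos hx]
      simp
    · have hx1 : ¬ (j + 1 ≤ x) := by omega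
      simp [hv, hx, hx1]
      intro h; exact absurd h.le hx
  have hvsummable : ∀ j, Summable (v j) := by
    intro j
    rw [hveq j]
    refine (summable_nat_add_iff j).1 ?_
    refine hDsummable.congr fun n => ?_
    simp [Nat.add_sub_cancel]
  have hvtsum : ∀ j, ∑' x, v j x = 2 * p m := by
    intro j
    have hs : Summable (fun x => if j ≤ x then D (x - j) else 0) := by
      rw [← hveq j]; exact hvsummable j
    rw [hveq j]
    have h := Summable.sum_add_tsum_nat_add (f := fun x => if j ≤ x then D (x - j) else 0) j hs
    have hz : ∑ i ∈ Finset.range j, (if j ≤ i then D (i - j) else 0) = 0 := by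
      refine Finset.sum_eq_zero fun i hi => ?_
      have : ¬ j ≤ i := by
        have := Finset.mem_range.1 hi; omega
      simp [this]
    rw [hz, zero_add] at h
    rw [← h]
    rw [← hDsum.tsum_eq]
    refine tsum_congr fun i => ?_
    simp [Nat.add_sub_cancel]
  -- pointwise telescoping bound
  have hptw : ∀ x, |(if K ≤ x then p (x - K) else 0) - p x| ≤
      ∑ j ∈ Finset.range K, v j x := by
    intro x
    have h0 : (fun j : ℕ => if j ≤ x then p (x - j) else 0) 0 = p x := by simp
    have htel : (if K ≤ x then p (x - K) else 0) - p x =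
        ∑ j ∈ Finset.range K,
          ((if j + 1 ≤ x then p (x - (j + 1)) else 0) - (if j ≤ x then p (x - j) else 0)) := by
      rw [Finset.sum_range_sub (fun j => if j ≤ x then p (x - j) else 0) K]
      simp
    rw [htel]
    exact Finset.abs_sum_le_sum_abs _ _
  have hbound : Summable (fun x => ∑ j ∈ Finset.range K, v j x) :=
    summable_sum fun j _ => hvsummable j
  have hlhs : Summable (fun x => |(if K ≤ x then p (x - K) else 0) - p x|) :=
    Summable.of_nonneg_of_le (fun x => abs_nonneg _) hptw hbound
  have hT : ∑' x, |(if K ≤ x then p (x - K) else 0) - p x| ≤ (K : ℝ) * (2 * p m) := by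
    calc ∑' x, |(if K ≤ x then p (x - K) else 0) - p x|
        ≤ ∑' x, ∑ j ∈ Finset.range K, v j x := Summable.tsum_le_tsum hptw hlhs hbound
      _ = ∑ j ∈ Finset.range K, ∑' x, v j x := Summable.tsum_finsetSum fun j _ => hvsummable j
      _ = ∑ j ∈ Finset.range K, (2 * p m) := by
          exact Finset.sum_congr rfl fun j _ => hvtsum j
      _ = (K : ℝ) * (2 * p m) := by
          rw [Finset.sum_const, Finset.card_range, nsmul_eq_mul]
  -- sup bound
  have hbdd : BddAbove (Set.range p) := by
    refine ⟨∑' x, p x, ?_⟩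
    rintro _ ⟨x, rfl⟩
    exact Summable.le_tsum hsum x fun j _ => hp j
  have hsup : p m ≤ ⨆ x : ℕ, p x := le_ciSup hbdd m
  have hKnn : (0 : ℝ) ≤ (K : ℝ) := Nat.cast_nonneg K
  calc (1 / 2 : ℝ) * ∑' x, |(if K ≤ x then p (x - K) else 0) - p x|
      ≤ (1 / 2 : ℝ) * ((K : ℝ) * (2 * p m)) := by
        exact mul_le_mul_of_nonneg_left hT (by norm_num)
    _ = (K : ℝ) * p m := by ring
    _ ≤ (K : ℝ) * ⨆ x : ℕ, p x := mul_le_mul_of_nonneg_left hsup hKnn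
end

section
/- Let λ ≥ 1 be a real and N a Poisson(λ) random variable. Then for every x ∈ ℕ, Pr(N = x) ≤ e/√(2π·⌊λ⌋). -/
lemma sqrt_pi_le_stirlingSeq (n : ℕ) : Real.sqrt Real.pi ≤ Stirling.stirlingSeq (n + 1) := by
  have h := Stirling.stirlingSeq'_antitone
  have := h.le_of_tendsto
    (Stirling.tendsto_stirlingSeq_sqrt_pi.comp (Filter.tendsto_add_atTop_nat 1)) n
  simpa using this

lemma stirling_lower (n : ℕ) (hn : 1 ≤ n) :
    Real.sqrt (2 * Real.pi * n) * ((n : ℝ) / Real.exp 1) ^ n ≤ (n.factorial : ℝ) := by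
  obtain ⟨m, rfl⟩ := Nat.exists_eq_add_of_le hn
  have h := sqrt_pi_le_stirlingSeq m
  rw [Nat.add_comm 1 m]
  rw [Stirling.stirlingSeq, le_div_iff₀ (by positivity)] at h
  calc Real.sqrt (2 * Real.pi * (m + 1 : ℕ)) * (((m + 1 : ℕ) : ℝ) / Real.exp 1) ^ (m + 1)
      = Real.sqrt Real.pi *
        (Real.sqrt (2 * (m + 1 : ℕ)) * (((m + 1 : ℕ) : ℝ) / Real.exp 1) ^ (m + 1)) := by
        rw [← mul_assoc, ← Real.sqrt_mul (by positivity)]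
        ring_nf
    _ ≤ _ := h

lemma mode_le (lam : ℝ) (hl : 0 < lam) (k : ℕ) :
    ∀ m, k ≤ m → (m : ℝ) ≤ lam →
      lam ^ k * (m.factorial : ℝ) ≤ lam ^ m * (k.factorial : ℝ) := by
  intro m hkm
  induction m, hkm using Nat.le_induction with
  | base => intro _; exact le_refl _
  | succ n hkn ih =>
    intro hn1
    have hn : (n : ℝ) ≤ lam := le_trans (by push_cast; linarith) hn1
    have ih' := ih hn
    have h1 : ((n : ℝ) + 1) ≤ lam := by push_cast at hn1 ⊢; linarith
    calc lam ^ k * ((n + 1).factorial : ℝ)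
        = ((n : ℝ) + 1) * (lam ^ k * (n.factorial : ℝ)) := by
          push_cast [Nat.factorial_succ]; ring
      _ ≤ ((n : ℝ) + 1) * (lam ^ n * (k.factorial : ℝ)) := by
          apply mul_le_mul_of_nonneg_left ih' (by positivity)
      _ ≤ lam * (lam ^ n * (k.factorial : ℝ)) := by
          apply mul_le_mul_of_nonneg_right h1 (by positivity)
      _ = lam ^ (n + 1) * (k.factorial : ℝ) := by ring

lemma mode_ge (lam : ℝ) (hl : 0 < lam) (m : ℕ) (hm : lam ≤ (m : ℝ) + 1) :
    ∀ x, m ≤ x → lam ^ x * (m.factorial : ℝ) ≤ lam ^ m * (x.factorial : ℝ) := by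
  intro x hmx
  induction x, hmx using Nat.le_induction with
  | base => exact le_refl _
  | succ n hmn ih =>
    have h1 : lam ≤ (n : ℝ) + 1 := le_trans hm (by exact_mod_cast by omega : ((m : ℝ) + 1) ≤ (n : ℝ) + 1)
    calc lam ^ (n + 1) * (m.factorial : ℝ)
        = lam * (lam ^ n * (m.factorial : ℝ)) := by ring
      _ ≤ lam * (lam ^ m * (n.factorial : ℝ)) := by
          apply mul_le_mul_of_nonneg_left ih (le_of_lt hl)
      _ ≤ ((n : ℝ) + 1) * (lam ^ m * (n.factorial : ℝ)) := by
          apply mul_le_mul_of_nonneg_right h1 (by positivity)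
      _ = lam ^ m * ((n + 1).factorial : ℝ) := by
          push_cast [Nat.factorial_succ]; ring

/-- Let `lam ≥ 1` and `N ~ Poisson (lam)`. For every `x : ℕ`,
`Pr (N = x) ≤ e / √(2 π ⌊lam⌋)`. -/
theorem poisson_pmf_le_stirling_bound
    (lam : ℝ) (hlam : 1 ≤ lam) (x : ℕ) :
    poissonPmfR lam x ≤ Real.exp 1 / Real.sqrt (2 * Real.pi * (⌊lam⌋₊ : ℝ)) := by
  set m := ⌊lam⌋₊ with hmdef
  have hl : (0 : ℝ) < lam := by linarith
  have hm1 : 1 ≤ m := Nat.le_floor (by simpa using hlam)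
  have hmle : (m : ℝ) ≤ lam := Nat.floor_le (le_of_lt hl)
  have hmlt : lam < (m : ℝ) + 1 := Nat.lt_floor_add_one lam
  have hM : (0 : ℝ) < (m : ℝ) := by exact_mod_cast hm1
  have hS : (0 : ℝ) < Real.sqrt (2 * Real.pi * m) := Real.sqrt_pos.mpr (by positivity)
  -- step 1 : pmf x ≤ pmf m
  have hmode : lam ^ x * (m.factorial : ℝ) ≤ lam ^ m * (x.factorial : ℝ) := by
    rcases le_total x m with h | h
    · exact mode_le lam hl x m h hmle
    · exact mode_ge lam hl m (le_of_lt hmlt) x h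
  have hstep1 : poissonPmfR lam x ≤ Real.exp (-lam) * lam ^ m / (m.factorial : ℝ) := by
    unfold poissonPmfR
    rw [div_le_div_iff₀ (by positivity) (by positivity)]
    have := mul_le_mul_of_nonneg_left hmode (le_of_lt (Real.exp_pos (-lam)))
    nlinarith [Real.exp_pos (-lam)]
  -- step 2 : lam^m ≤ m^m * exp (lam - m)
  have hkey : lam ^ m ≤ (m : ℝ) ^ m * Real.exp (lam - m) := by
    have h1 : lam / m ≤ Real.exp ((lam - m) / m) := by
      have := Real.add_one_le_exp ((lam - m) / m)
      have heq : (lam - m) / m + 1 = lam / m := by field_simp; ring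
      linarith [heq ▸ this]
    have h2 : (lam / m) ^ m ≤ Real.exp ((lam - m) / m) ^ m :=
      pow_le_pow_left₀ (by positivity) h1 m
    rw [← Real.exp_nat_mul] at h2
    have heq2 : (m : ℝ) * ((lam - m) / m) = lam - m := by field_simp
    rw [heq2, div_pow] at h2
    calc lam ^ m = (m : ℝ) ^ m * (lam ^ m / (m : ℝ) ^ m) := by field_simp
      _ ≤ (m : ℝ) ^ m * Real.exp (lam - m) := by
          apply mul_le_mul_of_nonneg_left h2 (by positivity)
  -- step 3 : combine with Stirling
  have hfac := stirling_lower m hm1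
  have hstep2 : Real.exp (-lam) * lam ^ m / (m.factorial : ℝ) ≤
      Real.exp (-lam) * ((m : ℝ) ^ m * Real.exp (lam - m)) /
        (Real.sqrt (2 * Real.pi * m) * ((m : ℝ) / Real.exp 1) ^ m) := by
    apply div_le_div₀ (by positivity)
    · exact mul_le_mul_of_nonneg_left hkey (le_of_lt (Real.exp_pos _))
    · positivity
    · exact hfac
  have heq3 : Real.exp (-lam) * ((m : ℝ) ^ m * Real.exp (lam - m)) /
      (Real.sqrt (2 * Real.pi * m) * ((m : ℝ) / Real.exp 1) ^ m) =
      1 / Real.sqrt (2 * Real.pi * m) := by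
    rw [div_pow, Real.exp_one_pow,
      show Real.exp (-lam) * ((m : ℝ) ^ m * Real.exp (lam - m)) =
        (m : ℝ) ^ m * (Real.exp (-lam) * Real.exp (lam - m)) from by ring,
      ← Real.exp_add, show -lam + (lam - (m : ℝ)) = -(m : ℝ) from by ring, Real.exp_neg]
    have hem : Real.exp (m : ℝ) ≠ 0 := Real.exp_ne_zero _
    have hmm : ((m : ℝ)) ^ m ≠ 0 := by positivity
    field_simp
  have hfin : (1 : ℝ) / Real.sqrt (2 * Real.pi * m) ≤
      Real.exp 1 / Real.sqrt (2 * Real.pi * m) := by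
    gcongr
    exact Real.one_le_exp zero_le_one
  calc poissonPmfR lam x ≤ _ := hstep1
    _ ≤ _ := hstep2
    _ = 1 / Real.sqrt (2 * Real.pi * m) := heq3
    _ ≤ _ := hfin
end

section
/- Fix an integer K ≥ 0. Let (p_n) ⊂ (0,1) be a sequence with n·p_n → ∞. Then n·[(1 − p_n)·ln(1 − K/n) + p_n·ln(1 + (1/p_n − 1)·K/n)] → 0 as n → ∞ (over n > K). -/
open Filter
open scoped Topology

theorem Real.tendsto_mul_log_one_plus_div_atTop (t : ℝ) :
    Tendsto (fun x : ℝ => x * Real.log (1 + t / x)) atTop (𝓝 t) :=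
  Real.tendsto_mul_log_one_add_of_tendsto (g := fun x : ℝ => t / x)
    (tendsto_const_nhds.congr' (by
      filter_upwards [eventually_ne_atTop 0] with x hx
      field_simp))

/-- Fix `K ≥ 0`. Let `p n ∈ (0,1)` with `n * p n → ∞`. Then
`n * ((1 - p n) * ln (1 - K/n) + p n * ln (1 + (1/(p n) - 1) * K/n)) → 0` as `n → ∞`. -/
theorem n_mul_log_combination_tendsto_zero
    (K : ℕ) (p : ℕ → ℝ) (hp : ∀ n, p n ∈ Set.Ioo (0 : ℝ) 1)
    (hnp : Tendsto (fun n : ℕ => (n : ℝ) * p n) atTop atTop) :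
    Tendsto (fun n : ℕ => (n : ℝ) *
        ((1 - p n) * Real.log (1 - (K : ℝ) / (n : ℝ)) +
          p n * Real.log (1 + (1 / p n - 1) * (K : ℝ) / (n : ℝ)))) atTop (𝓝 0) := by
  have hcast : Tendsto (fun n : ℕ => (n : ℝ)) atTop atTop := tendsto_natCast_atTop_atTop
  set u : ℕ → ℝ := fun n => p n * ((n : ℝ) - K) with hu
  have hu_top : Tendsto u atTop atTop := by
    apply tendsto_atTop_mono' atTop ?_
      (tendsto_atTop_add_const_right _ (-(K : ℝ)) hnp)
    filter_upwards with n
    have h1 := (hp n).1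
    have h2 := (hp n).2
    have hK0 : (0 : ℝ) ≤ K := Nat.cast_nonneg K
    have : u n = (n : ℝ) * p n - K * p n := by simp [hu]; ring
    nlinarith [h1.le, h2.le]
  -- limit of u n * log (1 + K / u n)
  have h1 : Tendsto (fun n : ℕ => u n * Real.log (1 + (K : ℝ) / u n)) atTop (𝓝 K) :=
    (Real.tendsto_mul_log_one_plus_div_atTop (K : ℝ)).comp hu_top
  -- limit of n * log (1 - K / n)
  have h2 : Tendsto (fun n : ℕ => (n : ℝ) * Real.log (1 - (K : ℝ) / n)) atTop (𝓝 (-(K : ℝ))) := by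
    have := (Real.tendsto_mul_log_one_plus_div_atTop (-(K : ℝ))).comp hcast
    refine this.congr fun n => ?_
    simp [neg_div, sub_eq_add_neg]
  -- limit of n / (n - K)
  have h3 : Tendsto (fun n : ℕ => (n : ℝ) / ((n : ℝ) - K)) atTop (𝓝 1) := by
    have hsub : Tendsto (fun n : ℕ => (n : ℝ) - K) atTop atTop :=
      tendsto_atTop_add_const_right _ (-(K : ℝ)) hcast |>.congr (by intro n; ring)
    have hK : Tendsto (fun n : ℕ => (K : ℝ) / ((n : ℝ) - K)) atTop (𝓝 0) :=
      Tendsto.div_atTop tendsto_const_nhds hsub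
    have : Tendsto (fun n : ℕ => 1 + (K : ℝ) / ((n : ℝ) - K)) atTop (𝓝 (1 + 0)) :=
      tendsto_const_nhds.add hK
    rw [add_zero] at this
    refine this.congr' ?_
    filter_upwards [eventually_gt_atTop K] with n hn
    have hnK : (K : ℝ) < n := by exact_mod_cast hn
    have hne : (n : ℝ) - K ≠ 0 := by linarith
    field_simp
    ring
  have hsum : Tendsto (fun n : ℕ =>
      (n : ℝ) * Real.log (1 - (K : ℝ) / n) +
        ((n : ℝ) / ((n : ℝ) - K)) * (u n * Real.log (1 + (K : ℝ) / u n)))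
      atTop (𝓝 0) := by
    have := h2.add (h3.mul h1)
    simpa using this
  refine hsum.congr' ?_
  filter_upwards [eventually_gt_atTop K, hu_top.eventually_gt_atTop 0] with n hn hun
  have hnK : (K : ℝ) < n := by exact_mod_cast hn
  have hn0 : (0 : ℝ) < n := lt_of_le_of_lt (Nat.cast_nonneg K) hnK
  have hq0 := (hp n).1
  have hx : (0 : ℝ) < 1 - (K : ℝ) / n := by
    rw [sub_pos, div_lt_one hn0]; exact hnK
  have hy : (0 : ℝ) < 1 + (K : ℝ) / u n := by
    have : (0 : ℝ) ≤ (K : ℝ) / u n := div_nonneg (Nat.cast_nonneg K) hun.le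
    linarith
  have hfact : 1 + (1 / p n - 1) * (K : ℝ) / n =
      (1 - (K : ℝ) / n) * (1 + (K : ℝ) / u n) := by
    have hunK : u n = p n * ((n : ℝ) - K) := rfl
    rw [hunK]
    have hne : (n : ℝ) - K ≠ 0 := by linarith
    field_simp
    ring
  have hlog : Real.log (1 + (1 / p n - 1) * (K : ℝ) / n) =
      Real.log (1 - (K : ℝ) / n) + Real.log (1 + (K : ℝ) / u n) := by
    rw [hfact, Real.log_mul hx.ne' hy.ne']
  rw [hlog]
  have hnd : (n : ℝ) / ((n : ℝ) - K) * (u n * Real.log (1 + (K : ℝ) / u n)) =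
      (n : ℝ) * p n * Real.log (1 + (K : ℝ) / u n) := by
    have : (n : ℝ) - K ≠ 0 := by linarith
    field_simp [hu]
    ring
  rw [hnd]
  ring
end

section
/- Let n ≥ 1 and r ≥ 1 be integers, K an integer with 0 ≤ K < n, and p = (p_0, …, p_r) a probability vector with p_r > 0. Define the probability vector p̄ by p̄_ℓ = (1 − K/n)·p_ℓ for 0 ≤ ℓ ≤ r−1 and p̄_r = (1 − K/n)·p_r + K/n. Then the Kullback–Leibler divergence satisfies D_KL(Multinomial(n; p) ‖ Multinomial(n; p̄)) = −n·[(1 − p_r)·ln(1 − K/n) + p_r·ln(1 + (1/p_r − 1)·K/n)]. -/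
/-- The probability mass function of the `Multinomial (n; p)` distribution on count vectors
`k : Fin d → ℕ`: it equals `n! ∏_ℓ p ℓ ^ (k ℓ) / (k ℓ)!` when `∑ ℓ, k ℓ = n`, and `0`
otherwise. -/
noncomputable def multinomialPmf {d : ℕ} (n : ℕ) (p : Fin d → ℝ) (k : Fin d → ℕ) : ℝ :=
  if (∑ ℓ, k ℓ) = n then
    (n.factorial : ℝ) * ∏ ℓ, p ℓ ^ (k ℓ) / ((k ℓ).factorial : ℝ)
  else 0

open Finset
lemma sumA (d n : ℕ) (p : Fin d → ℝ) :
    ∑ k ∈ piAntidiag (univ : Finset (Fin d)) n,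
      (n.factorial : ℝ) * ∏ ℓ, p ℓ ^ (k ℓ) / ((k ℓ).factorial : ℝ) = (∑ ℓ, p ℓ) ^ n := by
  rw [Finset.sum_pow_eq_sum_piAntidiag]
  refine Finset.sum_congr rfl fun k hk => ?_
  rw [Finset.mem_piAntidiag] at hk
  have hspec := Nat.multinomial_spec (univ : Finset (Fin d)) k
  have hfac : (0:ℝ) < ∏ ℓ, ((k ℓ).factorial : ℝ) :=
    Finset.prod_pos fun i _ => by positivity
  have : ((Nat.multinomial univ k : ℕ) : ℝ) = (n.factorial : ℝ) / ∏ ℓ, ((k ℓ).factorial : ℝ) := by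
    rw [eq_div_iff hfac.ne', ← hk.1]
    rw [mul_comm]
    exact_mod_cast congrArg (Nat.cast (R := ℝ)) hspec
  rw [this, Finset.prod_div_distrib]
  ring

lemma sumB (d n : ℕ) (hn : 1 ≤ n) (p : Fin d → ℝ) (ℓ : Fin d) :
    ∑ k ∈ piAntidiag (univ : Finset (Fin d)) n,
      ((n.factorial : ℝ) * ∏ i, p i ^ (k i) / ((k i).factorial : ℝ)) * (k ℓ : ℝ)
      = (n : ℝ) * p ℓ * (∑ i, p i) ^ (n - 1) := by
  rw [← Finset.sum_filter_of_ne (p := fun k => k ℓ ≠ 0)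
      (fun k _ h => by intro h0; simp [h0] at h)]
  rw [Finset.sum_nbij' (i := fun k => Function.update k ℓ (k ℓ - 1))
      (j := fun k => Function.update k ℓ (k ℓ + 1))
      (t := piAntidiag (univ : Finset (Fin d)) (n - 1))
      (g := fun k => (n : ℝ) * p ℓ *
        (((n-1).factorial : ℝ) * ∏ i, p i ^ (k i) / ((k i).factorial : ℝ)))]
  · rw [← Finset.mul_sum, sumA]
  · intro k hk
    simp only [mem_filter, mem_piAntidiag] at hk
    have h1 : k ℓ + ∑ i ∈ univ.erase ℓ, k i = n := by
      rw [Finset.add_sum_erase _ _ (mem_univ ℓ)]; exact hk.1.1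
    simp only [mem_piAntidiag]
    constructor
    · rw [← Finset.add_sum_erase _ _ (mem_univ ℓ), Function.update_self]
      have : ∑ i ∈ univ.erase ℓ, Function.update k ℓ (k ℓ - 1) i = ∑ i ∈ univ.erase ℓ, k i := by
        refine Finset.sum_congr rfl fun i hi => ?_
        exact Function.update_of_ne (Finset.ne_of_mem_erase hi) _ _
      rw [this]
      have hk2 := hk.2
      omega
    · intro i _; exact mem_univ i
  · intro k hk
    simp only [mem_piAntidiag] at hk
    have h1 : k ℓ + ∑ i ∈ univ.erase ℓ, k i = n - 1 := by
      rw [Finset.add_sum_erase _ _ (mem_univ ℓ)]; exact hk.1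
    simp only [mem_filter, mem_piAntidiag]
    refine ⟨⟨?_, fun i _ => mem_univ i⟩, by simp [Function.update_self]⟩
    rw [← Finset.add_sum_erase _ _ (mem_univ ℓ), Function.update_self]
    have : ∑ i ∈ univ.erase ℓ, Function.update k ℓ (k ℓ + 1) i = ∑ i ∈ univ.erase ℓ, k i := by
      refine Finset.sum_congr rfl fun i hi => ?_
      exact Function.update_of_ne (Finset.ne_of_mem_erase hi) _ _
    rw [this]; omega
  · intro k hk
    simp only [mem_filter, mem_piAntidiag] at hk
    funext i
    by_cases hi : i = ℓ
    · subst hi; simp [Function.update_self]; omega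
    · simp [Function.update_of_ne hi]
  · intro k hk
    funext i
    by_cases hi : i = ℓ
    · subst hi; simp [Function.update_self]
    · simp [Function.update_of_ne hi]
  · intro k hk
    simp only [mem_filter, mem_piAntidiag] at hk
    obtain ⟨m, hm⟩ : ∃ m, k ℓ = m + 1 := ⟨k ℓ - 1, by omega⟩
    obtain ⟨n', rfl⟩ : ∃ n', n = n' + 1 := ⟨n - 1, by omega⟩
    rw [← Finset.prod_erase_mul _ _ (mem_univ ℓ), ← Finset.prod_erase_mul _ _ (mem_univ ℓ)]
    have hcongr : ∏ i ∈ univ.erase ℓ, p i ^ (Function.update k ℓ (k ℓ - 1) i) /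
        ((Function.update k ℓ (k ℓ - 1) i).factorial : ℝ)
        = ∏ i ∈ univ.erase ℓ, p i ^ (k i) / ((k i).factorial : ℝ) := by
      refine Finset.prod_congr rfl fun i hi => ?_
      rw [Function.update_of_ne (Finset.ne_of_mem_erase hi)]
    rw [hcongr, Function.update_self, hm]
    simp only [Nat.add_sub_cancel, Nat.succ_sub_one]
    push_cast [Nat.factorial_succ]
    have hfm : ((m.factorial : ℝ)) ≠ 0 := by positivity
    field_simp
    ring

open Finset
/-- Let `n ≥ 1`, `r ≥ 1`, `0 ≤ K < n`, and let `p = (p_0, …, p_r)` be a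
probability vector with `p_r > 0`. Define `p̄` by `p̄_ℓ = (1 - K/n) p_ℓ` for `ℓ < r` and
`p̄_r = (1 - K/n) p_r + K/n`. Then
`D_KL(Multinomial (n; p) ‖ Multinomial (n; p̄)) = -n ((1 - p_r) ln (1 - K/n) + p_r ln (1 + (1/p_r - 1) K/n))`,
where `D_KL(P ‖ Q) = ∑_k P k * ln (P k / Q k)`. -/
theorem klDiv_multinomial_planted_eq
    (n r : ℕ) (hn : 1 ≤ n) (hr : 1 ≤ r) (K : ℕ) (hK : K < n)
    (p : Fin (r + 1) → ℝ) (hp0 : ∀ ℓ, 0 ≤ p ℓ) (hp1 : (∑ ℓ, p ℓ) = 1)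
    (hpr : 0 < p (Fin.last r)) :
    (∑' k : Fin (r + 1) → ℕ,
        multinomialPmf n p k *
          Real.log (multinomialPmf n p k /
            multinomialPmf n
              (fun ℓ => (1 - (K : ℝ) / (n : ℝ)) * p ℓ +
                (if ℓ = Fin.last r then (K : ℝ) / (n : ℝ) else 0)) k)) =
      -(n : ℝ) * ((1 - p (Fin.last r)) * Real.log (1 - (K : ℝ) / (n : ℝ)) +
        p (Fin.last r) *
          Real.log (1 + (1 / p (Fin.last r) - 1) * (K : ℝ) / (n : ℝ))) := by
  have hn0 : (0:ℝ) < n := by positivity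
  have hKn0 : (0:ℝ) ≤ (K:ℝ) / n := by positivity
  have hKn1 : (K:ℝ) / n < 1 := by
    rw [div_lt_one hn0]; exact_mod_cast hK
  have ht : (0:ℝ) < 1 - (K:ℝ)/n := by linarith
  set q : Fin (r + 1) → ℝ := fun ℓ => (1 - (K : ℝ) / (n : ℝ)) * p ℓ +
      (if ℓ = Fin.last r then (K : ℝ) / (n : ℝ) else 0) with hqdef
  set a := Real.log (1 - (K:ℝ)/n) with hadef
  set b := Real.log (1 + (1 / p (Fin.last r) - 1) * (K:ℝ) / (n:ℝ)) with hbdef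
  have hqlast : q (Fin.last r) = p (Fin.last r) * (1 + (1 / p (Fin.last r) - 1) * (K:ℝ) / (n:ℝ)) := by
    simp only [hqdef, if_pos rfl, ↓reduceIte]
    field_simp
    ring
  have hqlast_pos : 0 < q (Fin.last r) := by
    simp only [hqdef, if_pos rfl, if_true, eq_self_iff_true]
    have := mul_pos ht hpr
    linarith
  have hbarg_pos : 0 < 1 + (1 / p (Fin.last r) - 1) * (K:ℝ) / (n:ℝ) := by
    have h2 : 0 < p (Fin.last r) * (1 + (1 / p (Fin.last r) - 1) * (K:ℝ) / (n:ℝ)) :=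
      hqlast ▸ hqlast_pos
    nlinarith [h2, hpr]
  -- step 1 : reduce tsum to finite sum
  rw [tsum_eq_sum (s := piAntidiag (univ : Finset (Fin (r+1))) n) (f := fun k =>
      multinomialPmf n p k * Real.log (multinomialPmf n p k / multinomialPmf n q k))
    (by
      intro k hk
      have hsum : ¬ (∑ ℓ, k ℓ) = n := by
        simp only [mem_piAntidiag] at hk
        intro h; exact hk ⟨h, fun i _ => mem_univ i⟩
      unfold multinomialPmf; simp only [if_neg hsum, zero_mul])]
  -- step 2 : termwise rewrite
  have hterm : ∀ k ∈ piAntidiag (univ : Finset (Fin (r+1))) n,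
      multinomialPmf n p k * Real.log (multinomialPmf n p k / multinomialPmf n q k)
      = multinomialPmf n p k * (-(a * n)) + (a - b) * (multinomialPmf n p k * (k (Fin.last r) : ℝ)) := by
    intro k hk
    rw [mem_piAntidiag] at hk
    have hsum := hk.1
    by_cases hP : multinomialPmf n p k = 0
    · simp [hP]
    have hPdef : multinomialPmf n p k
        = (n.factorial : ℝ) * ∏ ℓ, p ℓ ^ (k ℓ) / ((k ℓ).factorial : ℝ) := by
      unfold multinomialPmf; rw [if_pos hsum]
    have hQdef : multinomialPmf n q k
        = (n.factorial : ℝ) * ∏ ℓ, q ℓ ^ (k ℓ) / ((k ℓ).factorial : ℝ) := by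
      unfold multinomialPmf; rw [if_pos hsum]
    have hprod : (∏ ℓ, p ℓ ^ (k ℓ) / ((k ℓ).factorial : ℝ)) ≠ 0 := by
      intro h0; exact hP (by rw [hPdef, h0, mul_zero])
    have hppos : ∀ i, k i ≠ 0 → 0 < p i := by
      intro i hi
      have := Finset.prod_ne_zero_iff.mp hprod i (mem_univ i)
      have hpi : p i ≠ 0 := by
        intro h0
        exact this (by rw [h0, zero_pow hi, zero_div])
      exact lt_of_le_of_ne (hp0 i) (Ne.symm hpi)
    have hqpos : ∀ i, k i ≠ 0 → 0 < q i := by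
      intro i hi
      by_cases hil : i = Fin.last r
      · rw [hil]; exact hqlast_pos
      · simp only [hqdef, if_neg hil, add_zero]
        exact mul_pos ht (hppos i hi)
    have hApos : ∀ i : Fin (r+1), p i ^ (k i) ≠ 0 := by
      intro i
      rcases Nat.eq_zero_or_pos (k i) with h | h
      · simp [h]
      · exact pow_ne_zero _ (hppos i h.ne').ne'
    have hBpos : ∀ i : Fin (r+1), q i ^ (k i) ≠ 0 := by
      intro i
      rcases Nat.eq_zero_or_pos (k i) with h | h
      · simp [h]
      · exact pow_ne_zero _ (hqpos i h.ne').ne'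
    have hF : (∏ i, ((k i).factorial : ℝ)) ≠ 0 := by positivity
    have hA : (∏ i, p i ^ (k i)) ≠ 0 := Finset.prod_ne_zero_iff.mpr fun i _ => hApos i
    have hB : (∏ i, q i ^ (k i)) ≠ 0 := Finset.prod_ne_zero_iff.mpr fun i _ => hBpos i
    have hratio : multinomialPmf n p k / multinomialPmf n q k
        = (∏ i, p i ^ (k i)) / (∏ i, q i ^ (k i)) := by
      rw [hPdef, hQdef, Finset.prod_div_distrib, Finset.prod_div_distrib]
      have hfac : ((n.factorial : ℝ)) ≠ 0 := by positivity
      field_simp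
    have hlog : Real.log (multinomialPmf n p k / multinomialPmf n q k)
        = ∑ i, ((k i : ℝ) * Real.log (p i) - (k i : ℝ) * Real.log (q i)) := by
      rw [hratio, Real.log_div hA hB,
        Real.log_prod (fun i _ => hApos i), Real.log_prod (fun i _ => hBpos i),
        ← Finset.sum_sub_distrib]
      refine Finset.sum_congr rfl fun i _ => ?_
      rw [Real.log_pow, Real.log_pow]
    have hsplit : ∑ i, ((k i : ℝ) * Real.log (p i) - (k i : ℝ) * Real.log (q i))
        = -(a * n) + (a - b) * (k (Fin.last r) : ℝ) := by
      rw [← Finset.add_sum_erase _ _ (mem_univ (Fin.last r))]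
      have hlastterm : (k (Fin.last r) : ℝ) * Real.log (p (Fin.last r))
          - (k (Fin.last r) : ℝ) * Real.log (q (Fin.last r))
          = (k (Fin.last r) : ℝ) * (-b) := by
        rw [hqlast, Real.log_mul hpr.ne' hbarg_pos.ne', ← hbdef]
        ring
      have herase : ∑ i ∈ univ.erase (Fin.last r),
          ((k i : ℝ) * Real.log (p i) - (k i : ℝ) * Real.log (q i))
          = -a * ((n : ℝ) - (k (Fin.last r) : ℝ)) := by
        have hsum2 : k (Fin.last r) + ∑ i ∈ univ.erase (Fin.last r), k i = n := by
          rw [Finset.add_sum_erase _ _ (mem_univ (Fin.last r))]; exact hsum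
        have hcast : (∑ i ∈ univ.erase (Fin.last r), (k i : ℝ)) = (n : ℝ) - (k (Fin.last r) : ℝ) := by
          have : ((∑ i ∈ univ.erase (Fin.last r), k i : ℕ) : ℝ)
              = (n : ℝ) - (k (Fin.last r) : ℝ) := by
            rw [eq_sub_iff_add_eq]
            exact_mod_cast by rw [add_comm]; exact hsum2
          rw [← this]; push_cast; rfl
        calc ∑ i ∈ univ.erase (Fin.last r),
            ((k i : ℝ) * Real.log (p i) - (k i : ℝ) * Real.log (q i))
            = ∑ i ∈ univ.erase (Fin.last r), (-a) * (k i : ℝ) := by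
              refine Finset.sum_congr rfl fun i hi => ?_
              have hil := Finset.ne_of_mem_erase hi
              rcases Nat.eq_zero_or_pos (k i) with h | h
              · simp [h]
              · have hpi := hppos i h.ne'
                have : q i = (1 - (K:ℝ)/n) * p i := by
                  simp [hqdef, if_neg hil]
                rw [this, Real.log_mul ht.ne' hpi.ne', ← hadef]
                ring
          _ = -a * ((n : ℝ) - (k (Fin.last r) : ℝ)) := by
              rw [← Finset.mul_sum, hcast]
      rw [hlastterm, herase]; ring
    rw [hlog, hsplit]; ring
  rw [Finset.sum_congr rfl hterm, Finset.sum_add_distrib, ← Finset.sum_mul, ← Finset.mul_sum]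
  have hS1 : ∑ k ∈ piAntidiag (univ : Finset (Fin (r+1))) n, multinomialPmf n p k = 1 := by
    have : ∀ k ∈ piAntidiag (univ : Finset (Fin (r+1))) n,
        multinomialPmf n p k = (n.factorial : ℝ) * ∏ ℓ, p ℓ ^ (k ℓ) / ((k ℓ).factorial : ℝ) := by
      intro k hk; rw [mem_piAntidiag] at hk; unfold multinomialPmf; rw [if_pos hk.1]
    rw [Finset.sum_congr rfl this, sumA, hp1, one_pow]
  have hS2 : ∑ k ∈ piAntidiag (univ : Finset (Fin (r+1))) n,
      multinomialPmf n p k * (k (Fin.last r) : ℝ) = (n : ℝ) * p (Fin.last r) := by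
    have : ∀ k ∈ piAntidiag (univ : Finset (Fin (r+1))) n,
        multinomialPmf n p k * (k (Fin.last r) : ℝ)
        = ((n.factorial : ℝ) * ∏ ℓ, p ℓ ^ (k ℓ) / ((k ℓ).factorial : ℝ)) * (k (Fin.last r) : ℝ) := by
      intro k hk; rw [mem_piAntidiag] at hk; unfold multinomialPmf; rw [if_pos hk.1]
    rw [Finset.sum_congr rfl this, sumB _ _ hn, hp1, one_pow, mul_one]
  rw [hS1, hS2, hadef, hbdef]
  ring
end
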